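/- arXiv:1005.5414 — 7 statements merged into one kernel-verified Lean document; each statement's English description precedes it below -/
import Mathlib

section
/- Let f : 𝔘 → ℝ be measurable, and let 𝒞 and 𝓑 be measurable ordered partitions of 𝔘 associated to partitions 𝒞* and 𝓑* of N = {1,…,n}, with 𝒞 ≤_ref 𝓑 (every set of 𝒞 is a union of sets of 𝓑). Then the stratified maximum estimators satisfy W_S^𝒞 ≤_st W_S^𝓑, i.e. P(W_S^𝒞 > t) ≤ P(W_S^𝓑 > t) for all real t. -/
open MeasureTheory ProbabilityTheory Finset

/-- A measurable ordered partition of `𝔘` associated to a partition of `N = {1,…,n}`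
(modelled as `Fin n`).  The partition of `Fin n` is encoded by the fiber map `idx`:
the block `B*` corresponding to the stratum `sets i` is the fiber `{j | idx j = i}`,
so that `P(U ∈ B_i) = |B_i*| / n` with every `|B_i*|` a positive integer. -/
structure StratPart (𝔘 : Type*) [MeasurableSpace 𝔘] (μ : Measure 𝔘) (n : ℕ) where
  b : ℕ
  sets : Fin b → Set 𝔘
  meas : ∀ i, MeasurableSet (sets i)
  disj : Pairwise (Function.onFun Disjoint sets)
  cover : (⋃ i, sets i) = Set.univ
  idx : Fin n → Fin b
  idx_surj : Function.Surjective idx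
  prob : ∀ i, μ (sets i) =
    ((Finset.univ.filter fun j => idx j = i).card : ENNReal) / (n : ENNReal)

/-- `|B_i*|`, the number of sample indices assigned to stratum `i`. -/
def StratPart.blockCard {𝔘 : Type*} [MeasurableSpace 𝔘] {μ : Measure 𝔘} {n : ℕ}
    (B : StratPart 𝔘 μ n) (i : Fin B.b) : ℕ :=
  (Finset.univ.filter fun j => B.idx j = i).card

/-- `C ≤_ref B` : every set of `C` is a union of sets of `B`, with the associated
partitions of `Fin n` refining compatibly. -/
def StratPart.Refines {𝔘 : Type*} [MeasurableSpace 𝔘] {μ : Measure 𝔘} {n : ℕ}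
    (C B : StratPart 𝔘 μ n) : Prop :=
  ∃ ρ : Fin B.b → Fin C.b, (∀ i, B.sets i ⊆ C.sets (ρ i)) ∧ ∀ j, C.idx j = ρ (B.idx j)

/-- `{V_j^B : j ∈ B*, B ∈ 𝓑}` is a stratified sample for the partition `B`:
the `V_j` are independent and `V_j` has the conditional law `P_{U|B}` of the stratum of `j`. -/
def IsStratSample {Ω 𝔘 : Type*} [MeasurableSpace Ω] [MeasurableSpace 𝔘] {μ : Measure 𝔘}
    {n : ℕ} (B : StratPart 𝔘 μ n) (P : Measure Ω) (V : Fin n → Ω → 𝔘) : Prop :=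
  (∀ j, Measurable (V j)) ∧ iIndepFun V P ∧
    ∀ j, Measure.map (V j) P = μ[|B.sets (B.idx j)]

/-- The stratified maximum estimator `W_S^𝓑 = max_{B ∈ 𝓑} max_{j ∈ B*} f(V_j^B)`. -/
noncomputable def WS {Ω 𝔘 : Type*} {n : ℕ} (f : 𝔘 → ℝ) (V : Fin n → Ω → 𝔘) (ω : Ω) : ℝ :=
  ⨆ j, f (V j ω)

section AuxLemmas
variable {Ω 𝔘 : Type*} [MeasurableSpace Ω] [MeasurableSpace 𝔘]

lemma StratPart.blockCard_pos {μ : Measure 𝔘} {n : ℕ} (D : StratPart 𝔘 μ n) (i : Fin D.b) :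
    0 < D.blockCard i := by
  obtain ⟨j, hj⟩ := D.idx_surj i
  exact Finset.card_pos.mpr ⟨j, by simp [hj]⟩

lemma StratPart.measure_sets_eq {μ : Measure 𝔘} {n : ℕ} (D : StratPart 𝔘 μ n) (i : Fin D.b) :
    μ (D.sets i) = (D.blockCard i : ENNReal) / (n : ENNReal) := D.prob i

lemma StratPart.measure_sets_ne_zero {μ : Measure 𝔘} {n : ℕ} (D : StratPart 𝔘 μ n)
    (i : Fin D.b) : μ (D.sets i) ≠ 0 := by
  rw [D.measure_sets_eq i]
  exact (ENNReal.div_pos (by exact_mod_cast (D.blockCard_pos i).ne') (by simp)).ne'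

lemma key_block {μ : Measure 𝔘} [IsProbabilityMeasure μ] {n : ℕ} [NeZero n]
    {s : Set 𝔘} (hs : MeasurableSet s)
    (C B : StratPart 𝔘 μ n) (ρ : Fin B.b → Fin C.b)
    (hsub : ∀ i, B.sets i ⊆ C.sets (ρ i)) (hidx : ∀ j, C.idx j = ρ (B.idx j))
    (k : Fin C.b) :
    ∏ i ∈ univ.filter fun i => ρ i = k, (μ[|B.sets i] s) ^ B.blockCard i
      ≤ (μ[|C.sets k] s) ^ C.blockCard k := by
  classical
  set T : Finset (Fin B.b) := univ.filter fun i => ρ i = k with hT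
  -- cardinality relation
  have hcard : C.blockCard k = ∑ i ∈ T, B.blockCard i := by
    have h1 : (univ.filter fun j => C.idx j = k) = univ.filter fun j => ρ (B.idx j) = k := by
      apply Finset.filter_congr; intro j _; rw [hidx j]
    rw [StratPart.blockCard, h1,
      Finset.card_eq_sum_card_fiberwise (f := B.idx) (t := T)
        (fun j hj => by simp only [T, Finset.mem_coe, mem_filter, mem_univ, true_and] at hj ⊢; exact hj)]
    refine Finset.sum_congr rfl fun i hi => ?_
    have hik : ρ i = k := by simpa [T] using hi
    rw [Finset.filter_filter, StratPart.blockCard]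
    congr 1
    apply Finset.filter_congr; intro j _
    constructor
    · exact fun h => h.2
    · intro h; exact ⟨by rw [h, hik], h⟩
  -- set relation
  have hCeq : C.sets k = ⋃ i ∈ T, B.sets i := by
    ext x
    simp only [Set.mem_iUnion, exists_prop, mem_filter, mem_univ, true_and, T]
    constructor
    · intro hx
      have hx' : x ∈ ⋃ i, B.sets i := by rw [B.cover]; trivial
      obtain ⟨i, hi⟩ := Set.mem_iUnion.mp hx'
      refine ⟨i, ?_, hi⟩
      by_contra hne
      exact Set.disjoint_left.mp (C.disj hne) (hsub i hi) hx
    · rintro ⟨i, hik, hi⟩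
      exact hik ▸ hsub i hi
  have hμC : μ (C.sets k ∩ s) = ∑ i ∈ T, μ (B.sets i ∩ s) := by
    rw [hCeq, Set.iUnion₂_inter]
    exact measure_biUnion_finset
      (fun i _ j _ hij => ((B.disj hij).mono Set.inter_subset_left Set.inter_subset_left))
      (fun i _ => (B.meas i).inter hs)
  -- real quantities
  set m : ℕ := C.blockCard k with hm_def
  have hm : 0 < m := C.blockCard_pos k
  have hmR : (0:ℝ) < m := by exact_mod_cast hm
  have hnR : (0:ℝ) < n := by exact_mod_cast Nat.pos_of_ne_zero (NeZero.ne n)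
  set a : Fin B.b → ℝ := fun i => (μ (B.sets i ∩ s)).toReal with ha
  set p : Fin B.b → ℝ := fun i => ((μ (B.sets i))⁻¹).toReal * a i with hp
  set pc : ℝ := ((μ (C.sets k))⁻¹).toReal * (μ (C.sets k ∩ s)).toReal with hpc
  have hκR : ∀ i : Fin B.b, (0:ℝ) < B.blockCard i := fun i => by
    exact_mod_cast B.blockCard_pos i
  have hbR : ∀ i : Fin B.b, ((μ (B.sets i))⁻¹).toReal = n / (B.blockCard i : ℝ) := fun i => by
    rw [B.measure_sets_eq i,
      ENNReal.inv_div (Or.inl (by simp)) (Or.inl (by exact_mod_cast NeZero.ne n))]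
    simp [ENNReal.toReal_div]
  have hcR : ((μ (C.sets k))⁻¹).toReal = n / (m : ℝ) := by
    rw [C.measure_sets_eq k,
      ENNReal.inv_div (Or.inl (by simp)) (Or.inl (by exact_mod_cast NeZero.ne n))]
    simp [ENNReal.toReal_div, hm_def]
  have hpnn : ∀ i, 0 ≤ p i := fun i => mul_nonneg ENNReal.toReal_nonneg ENNReal.toReal_nonneg
  -- pc as weighted average
  have hq : pc = ∑ i ∈ T, ((B.blockCard i : ℝ) / m) * p i := by
    rw [hpc, hcR, hμC, ENNReal.toReal_sum (fun i _ => measure_ne_top μ _), Finset.mul_sum]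
    refine Finset.sum_congr rfl fun i _ => ?_
    simp only [hp, ha]
    rw [hbR i]
    have hκ : (B.blockCard i : ℝ) ≠ 0 := (hκR i).ne'
    field_simp
  have hw : ∑ i ∈ T, (B.blockCard i : ℝ) / m = 1 := by
    rw [← Finset.sum_div]
    rw [show ∑ i ∈ T, (B.blockCard i : ℝ) = (m : ℝ) by rw [hcard]; push_cast; ring]
    exact div_self hmR.ne'
  have hAM : ∏ i ∈ T, p i ^ ((B.blockCard i : ℝ) / m) ≤ pc := by
    rw [hq]
    exact Real.geom_mean_le_arith_mean_weighted T _ p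
      (fun i _ => div_nonneg (hκR i).le hmR.le) hw (fun i _ => hpnn i)
  have hprod_nn : 0 ≤ ∏ i ∈ T, p i ^ ((B.blockCard i : ℝ) / m) :=
    Finset.prod_nonneg fun i _ => Real.rpow_nonneg (hpnn i) _
  have hpow : (∏ i ∈ T, p i ^ ((B.blockCard i : ℝ) / m)) ^ m = ∏ i ∈ T, p i ^ B.blockCard i := by
    rw [← Finset.prod_pow]
    refine Finset.prod_congr rfl fun i _ => ?_
    rw [← Real.rpow_natCast (p i ^ ((B.blockCard i : ℝ) / m)) m,
      ← Real.rpow_mul (hpnn i), div_mul_cancel₀ _ hmR.ne', Real.rpow_natCast]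
  have key : ∏ i ∈ T, p i ^ B.blockCard i ≤ pc ^ m := by
    rw [← hpow]
    exact pow_le_pow_left₀ hprod_nn hAM m
  -- lift to ENNReal
  have hBfin : ∀ i : Fin B.b, μ[|B.sets i] s ≠ ⊤ := fun i => by
    rw [cond_apply (B.meas i)]
    exact ENNReal.mul_ne_top (ENNReal.inv_ne_top.mpr (B.measure_sets_ne_zero i))
      (measure_ne_top μ _)
  have hCfin : μ[|C.sets k] s ≠ ⊤ := by
    rw [cond_apply (C.meas k)]
    exact ENNReal.mul_ne_top (ENNReal.inv_ne_top.mpr (C.measure_sets_ne_zero k))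
      (measure_ne_top μ _)
  have hLfin : (∏ i ∈ T, (μ[|B.sets i] s) ^ B.blockCard i) ≠ ⊤ :=
    (ENNReal.prod_lt_top fun i _ => (ENNReal.pow_ne_top (hBfin i)).lt_top).ne
  refine (ENNReal.toReal_le_toReal hLfin (ENNReal.pow_ne_top hCfin)).mp ?_
  rw [ENNReal.toReal_prod, ENNReal.toReal_pow]
  have h1 : ∀ i ∈ T, ((μ[|B.sets i] s) ^ B.blockCard i).toReal = p i ^ B.blockCard i := by
    intro i _
    rw [ENNReal.toReal_pow, cond_apply (B.meas i), ENNReal.toReal_mul]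
  have h2 : (μ[|C.sets k] s).toReal = pc := by
    rw [cond_apply (C.meas k), ENNReal.toReal_mul]
  rw [Finset.prod_congr rfl h1, h2]
  exact key
end AuxLemmas

lemma tail_formula {Ω 𝔘 : Type*} [MeasurableSpace Ω] [MeasurableSpace 𝔘]
    {μ : Measure 𝔘} (P : Measure Ω) [IsProbabilityMeasure P]
    {n : ℕ} [NeZero n] {f : 𝔘 → ℝ} (hf : Measurable f) (D : StratPart 𝔘 μ n)
    (V : Fin n → Ω → 𝔘) (hV : IsStratSample D P V) (t : ℝ) :
    P {ω | t < WS f V ω} = 1 - ∏ j, μ[|D.sets (D.idx j)] {x | f x ≤ t} := by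
  obtain ⟨hmeas, hindep, hlaw⟩ := hV
  have hs : MeasurableSet {x | f x ≤ t} := measurableSet_le hf measurable_const
  haveI : Nonempty (Fin n) := ⟨⟨0, Nat.pos_of_ne_zero (NeZero.ne n)⟩⟩
  have hset : {ω | t < WS f V ω} = (⋂ j, V j ⁻¹' {x | f x ≤ t})ᶜ := by
    ext ω
    simp only [Set.mem_setOf_eq, Set.mem_compl_iff, Set.mem_iInter, Set.mem_preimage,
      not_forall, not_le, WS]
    exact lt_ciSup_iff (Set.finite_range _).bddAbove
  rw [hset, prob_compl_eq_one_sub (MeasurableSet.iInter fun j => hmeas j hs),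
    hindep.meas_iInter fun j => ⟨_, hs, rfl⟩]
  congr 1
  refine Finset.prod_congr rfl fun j _ => ?_
  rw [← hlaw j, Measure.map_apply (hmeas j) hs]

/-- Theorem 3.1: if `𝒞 ≤_ref 𝓑` then `W_S^𝒞 ≤_st W_S^𝓑`. -/
theorem stratified_max_stochastic_order
    {Ω 𝔘 : Type*} [MeasurableSpace Ω] [MeasurableSpace 𝔘]
    (μ : Measure 𝔘) [IsProbabilityMeasure μ] [NullSingletonClass μ]
    (P : Measure Ω) [IsProbabilityMeasure P]
    (n : ℕ) [NeZero n] (f : 𝔘 → ℝ) (hf : Measurable f)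
    (C B : StratPart 𝔘 μ n) (href : C.Refines B)
    (VB VC : Fin n → Ω → 𝔘)
    (hVB : IsStratSample B P VB) (hVC : IsStratSample C P VC) :
    ∀ t : ℝ, P {ω | t < WS f VC ω} ≤ P {ω | t < WS f VB ω} := by
  intro t
  classical
  obtain ⟨ρ, hsub, hidx⟩ := href
  have hs : MeasurableSet {x | f x ≤ t} := measurableSet_le hf measurable_const
  rw [tail_formula P hf C VC hVC t, tail_formula P hf B VB hVB t]
  refine tsub_le_tsub_left ?_ 1
  have hrw : ∀ {b : ℕ} (g : Fin b → ENNReal) (idx : Fin n → Fin b), Function.Surjective idx →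
      ∏ j, g (idx j) = ∏ i, g i ^ (Finset.univ.filter fun j => idx j = i).card := by
    intro b g idx hsurj
    rw [Finset.prod_comp g idx, Finset.image_univ_of_surjective hsurj]
  rw [hrw (fun i => μ[|B.sets i] {x | f x ≤ t}) B.idx B.idx_surj,
    hrw (fun i => μ[|C.sets i] {x | f x ≤ t}) C.idx C.idx_surj]
  rw [← Finset.prod_fiberwise_of_maps_to (g := ρ) (fun i _ => Finset.mem_univ (ρ i))
    (fun i => (μ[|B.sets i] {x | f x ≤ t}) ^ (Finset.univ.filter fun j => B.idx j = i).card)]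
  refine Finset.prod_le_prod' fun k _ => ?_
  exact key_block hs C B ρ hsub hidx k
end

section
/- Let f : 𝔘 → [0,1] be measurable, and let 𝒞 and 𝓑 be measurable ordered partitions of 𝔘 associated to partitions 𝒞* and 𝓑* of N = {1,…,n}, with 𝒞 ≤_ref 𝓑 (every set of 𝒞 is a union of sets of 𝓑). Then the censored maximum estimators satisfy W_CS^𝒞 ≤_st W_CS^𝓑, i.e. P(W_CS^𝒞 > t) ≤ P(W_CS^𝓑 > t) for all real t. -/
open MeasureTheory ProbabilityTheory

private lemma amgm_nat {ι : Type*} (s : Finset ι) (k : ι → ℕ) (x : ι → ℝ) (hx : ∀ i ∈ s, 0 ≤ x i)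
    (hK : 0 < ∑ i ∈ s, k i) :
    ∏ i ∈ s, x i ^ k i ≤ ((∑ i ∈ s, (k i : ℝ) * x i) / (∑ i ∈ s, k i)) ^ (∑ i ∈ s, k i) := by
  set K : ℕ := ∑ i ∈ s, k i with hKdef
  have hK0 : (0:ℝ) < (K:ℝ) := by exact_mod_cast hK
  have hamgm := Real.geom_mean_le_arith_mean_weighted s (fun i => (k i : ℝ) / K) x
    (fun i _ => by positivity)
    (by rw [← Finset.sum_div, ← Nat.cast_sum, ← hKdef, div_self hK0.ne'])
    hx
  have hL : (∏ i ∈ s, x i ^ ((k i : ℝ) / K)) ^ K = ∏ i ∈ s, x i ^ k i := by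
    rw [← Finset.prod_pow]
    refine Finset.prod_congr rfl fun i hi => ?_
    rw [← Real.rpow_natCast (x i ^ ((k i:ℝ)/K)) K, ← Real.rpow_mul (hx i hi),
      div_mul_cancel₀ _ hK0.ne', Real.rpow_natCast]
  have hR : ∑ i ∈ s, ((k i : ℝ) / K) * x i = (∑ i ∈ s, (k i : ℝ) * x i) / K := by
    rw [Finset.sum_div]
    exact Finset.sum_congr rfl fun i _ => by ring
  calc ∏ i ∈ s, x i ^ k i = (∏ i ∈ s, x i ^ ((k i : ℝ) / K)) ^ K := hL.symm
    _ ≤ (∑ i ∈ s, ((k i : ℝ) / K) * x i) ^ K := by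
        apply pow_le_pow_left₀ (Finset.prod_nonneg fun i hi => Real.rpow_nonneg (hx i hi) _) hamgm
    _ = ((∑ i ∈ s, (k i : ℝ) * x i) / K) ^ K := by rw [hR]

open Finset in
private lemma group_ineq {ι : Type*} (s : Finset ι) (k : ι → ℕ) (a : ι → ENNReal)
    (ha : ∀ i ∈ s, a i ≤ 1) (hK : 0 < ∑ i ∈ s, k i) :
    ∏ i ∈ s, (1 - a i) ^ k i ≤
      (1 - (∑ i ∈ s, (k i : ENNReal) * a i) / ((∑ i ∈ s, k i : ℕ) : ENNReal)) ^ (∑ i ∈ s, k i) := by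
  set K : ℕ := ∑ i ∈ s, k i with hKdef
  have hK0 : (0:ℝ) < (K:ℝ) := by exact_mod_cast hK
  set A : ι → ℝ := fun i => (a i).toReal with hAdef
  have hane : ∀ i ∈ s, a i ≠ ⊤ := fun i hi => (lt_of_le_of_lt (ha i hi) ENNReal.one_lt_top).ne
  have haeq : ∀ i ∈ s, a i = ENNReal.ofReal (A i) := fun i hi =>
    (ENNReal.ofReal_toReal (hane i hi)).symm
  have hA0 : ∀ i ∈ s, 0 ≤ A i := fun i _ => ENNReal.toReal_nonneg
  have hA1 : ∀ i ∈ s, A i ≤ 1 := fun i hi => by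
    rw [hAdef]
    exact ENNReal.toReal_le_of_le_ofReal zero_le_one (by simpa using ha i hi)
  -- sum bound
  have hsumle : ∑ i ∈ s, (k i : ℝ) * A i ≤ (K : ℝ) := by
    rw [hKdef]
    push_cast
    exact Finset.sum_le_sum fun i hi => by
      nlinarith [hA1 i hi, hA0 i hi, Nat.cast_nonneg (α := ℝ) (k i)]
  have hsumnn : (0:ℝ) ≤ ∑ i ∈ s, (k i : ℝ) * A i :=
    Finset.sum_nonneg fun i hi => mul_nonneg (Nat.cast_nonneg _) (hA0 i hi)
  -- LHS
  have hL : ∏ i ∈ s, (1 - a i) ^ k i = ENNReal.ofReal (∏ i ∈ s, (1 - A i) ^ k i) := by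
    rw [ENNReal.ofReal_prod_of_nonneg (fun i hi => pow_nonneg (by linarith [hA1 i hi]) _)]
    refine Finset.prod_congr rfl fun i hi => ?_
    rw [ENNReal.ofReal_pow (by linarith [hA1 i hi]), ENNReal.ofReal_sub _ (hA0 i hi),
      ENNReal.ofReal_one, ← haeq i hi]
  -- RHS sum
  have hS : ∑ i ∈ s, (k i : ENNReal) * a i = ENNReal.ofReal (∑ i ∈ s, (k i : ℝ) * A i) := by
    rw [ENNReal.ofReal_sum_of_nonneg (fun i hi => mul_nonneg (Nat.cast_nonneg _) (hA0 i hi))]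
    refine Finset.sum_congr rfl fun i hi => ?_
    rw [ENNReal.ofReal_mul (Nat.cast_nonneg _), ← haeq i hi, ENNReal.ofReal_natCast]
  have hR : (1 - (∑ i ∈ s, (k i : ENNReal) * a i) / (K : ENNReal)) ^ K
      = ENNReal.ofReal ((1 - (∑ i ∈ s, (k i : ℝ) * A i) / (K:ℝ)) ^ K) := by
    rw [hS, ENNReal.ofReal_pow (by rw [sub_nonneg, div_le_one hK0]; exact hsumle),
      ENNReal.ofReal_sub _ (by positivity), ENNReal.ofReal_one,
      ENNReal.ofReal_div_of_pos hK0, ENNReal.ofReal_natCast]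
  rw [hL, hR]
  apply ENNReal.ofReal_le_ofReal
  calc ∏ i ∈ s, (1 - A i) ^ k i
      ≤ ((∑ i ∈ s, (k i : ℝ) * (1 - A i)) / (K:ℝ)) ^ K :=
        amgm_nat s k _ (fun i hi => by linarith [hA1 i hi]) hK
    _ = (1 - (∑ i ∈ s, (k i : ℝ) * A i) / (K:ℝ)) ^ K := by
        congr 1
        have : ∑ i ∈ s, (k i : ℝ) * (1 - A i) = (K:ℝ) - ∑ i ∈ s, (k i : ℝ) * A i := by
          rw [hKdef]
          push_cast
          rw [← Finset.sum_sub_distrib]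
          exact Finset.sum_congr rfl fun i _ => by ring
        rw [this]
        field_simp

private lemma grouped_ineq {ιB ιC : Type*} [Fintype ιB] [Fintype ιC] [DecidableEq ιC]
    (rho : ιB → ιC) (k : ιB → ℕ) (a : ιB → ENNReal) (ha : ∀ i, a i ≤ 1)
    (hK : ∀ m, 0 < ∑ i ∈ Finset.univ.filter (fun i => rho i = m), k i) :
    ∏ i, (1 - a i) ^ k i ≤
      ∏ m, (1 - (∑ i ∈ Finset.univ.filter (fun i => rho i = m), (k i : ENNReal) * a i) /
          ((∑ i ∈ Finset.univ.filter (fun i => rho i = m), k i : ℕ) : ENNReal)) ^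
        (∑ i ∈ Finset.univ.filter (fun i => rho i = m), k i) := by
  rw [← Finset.prod_fiberwise_of_maps_to (g := rho) (fun i _ => Finset.mem_univ (rho i))
    (fun i => (1 - a i) ^ k i)]
  exact Finset.prod_le_prod' fun m _ => group_ineq _ _ _ (fun i _ => ha i) (hK m)

/-- A censored stratified sample: the pairs `(V_j, T_j)` are independent across `j`,
`V_j` has the conditional law `P_{U|B}` of the stratum of `j`, `T_j` is uniform on `[0,1]`,
and `V_j` is independent of `T_j` (the law of the pair is the product law). -/
def IsCensoredStratSample {Ω 𝔘 : Type*} [MeasurableSpace Ω] [MeasurableSpace 𝔘]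
    {μ : Measure 𝔘} {n : ℕ} (B : StratPart 𝔘 μ n) (P : Measure Ω)
    (V : Fin n → Ω → 𝔘) (T : Fin n → Ω → ℝ) : Prop :=
  (∀ j, Measurable (V j)) ∧ (∀ j, Measurable (T j)) ∧
    iIndepFun (fun j ω => (V j ω, T j ω)) P ∧
    ∀ j, Measure.map (fun ω => (V j ω, T j ω)) P =
      (μ[|B.sets (B.idx j)]).prod (volume.restrict (Set.Icc (0:ℝ) 1))

/-- The censored maximum estimator `W_CS^𝓑 = max {T_j : j ∈ S^𝓑}`, equal to `0` when
`S^𝓑 = {j : T_j ≤ f(V_j)}` is empty (the empty supremum in `ℝ` is `0`). -/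
noncomputable def WCS {Ω 𝔘 : Type*} {n : ℕ} (f : 𝔘 → ℝ) (V : Fin n → Ω → 𝔘)
    (T : Fin n → Ω → ℝ) (ω : Ω) : ℝ :=
  ⨆ j : {j : Fin n // T j ω ≤ f (V j ω)}, T j.1 ω


section Lemmas

variable {Ω 𝔘 : Type*} [MeasurableSpace Ω] [MeasurableSpace 𝔘]
    {μ : Measure 𝔘} [IsProbabilityMeasure μ]
    {P : Measure Ω} [IsProbabilityMeasure P]
    {n : ℕ} [NeZero n] {f : 𝔘 → ℝ}


lemma wcs_lt_iff {V : Fin n → Ω → 𝔘} {T : Fin n → Ω → ℝ} {t : ℝ} (ht : 0 ≤ t) (ω : Ω) :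
    t < WCS f V T ω ↔ ∃ j, t < T j ω ∧ T j ω ≤ f (V j ω) := by
  unfold WCS
  constructor
  · intro h
    rcases isEmpty_or_nonempty {j : Fin n // T j ω ≤ f (V j ω)} with he | hne
    · rw [Real.iSup_of_isEmpty] at h; linarith
    · obtain ⟨j0, hj0⟩ := Finite.exists_max (fun j : {j : Fin n // T j ω ≤ f (V j ω)} => T j.1 ω)
      have hle : (⨆ j : {j : Fin n // T j ω ≤ f (V j ω)}, T j.1 ω) ≤ T j0.1 ω := ciSup_le hj0
      exact ⟨j0.1, lt_of_lt_of_le h hle, j0.2⟩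
  · rintro ⟨j, h1, h2⟩
    have : (fun j : {j : Fin n // T j ω ≤ f (V j ω)} => T j.1 ω) ⟨j, h2⟩ ≤
        ⨆ j : {j : Fin n // T j ω ≤ f (V j ω)}, T j.1 ω :=
      le_ciSup (f := fun j : {j : Fin n // T j ω ≤ f (V j ω)} => T j.1 ω)
        (Set.Finite.bddAbove (Set.finite_range _)) ⟨j, h2⟩
    exact lt_of_lt_of_le h1 this

lemma blockCard_pos (B : StratPart 𝔘 μ n) (i : Fin B.b) : 0 < B.blockCard i := by
  obtain ⟨j, hj⟩ := B.idx_surj i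
  exact Finset.card_pos.2 ⟨j, Finset.mem_filter.2 ⟨Finset.mem_univ j, hj⟩⟩

lemma meas_sets_ne_zero (B : StratPart 𝔘 μ n) (i : Fin B.b) : μ (B.sets i) ≠ 0 := by
  rw [B.prob i]
  have h1 : (B.blockCard i : ENNReal) ≠ 0 := by
    exact_mod_cast (blockCard_pos (μ := μ) B i).ne'
  simp only [StratPart.blockCard] at h1
  exact ENNReal.div_ne_zero.2 ⟨h1, ENNReal.natCast_ne_top n⟩

lemma meas_sets_ne_top (B : StratPart 𝔘 μ n) (i : Fin B.b) : μ (B.sets i) ≠ ⊤ :=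
  (measure_lt_top μ _).ne

lemma sample_prob (hf : Measurable f) (hf01 : ∀ u, f u ∈ Set.Icc (0:ℝ) 1)
    (B : StratPart 𝔘 μ n) {V : Fin n → Ω → 𝔘} {T : Fin n → Ω → ℝ}
    (h : IsCensoredStratSample B P V T) {t : ℝ} (ht : 0 ≤ t) :
    P {ω | t < WCS f V T ω} =
      1 - ∏ i : Fin B.b,
        (1 - (μ (B.sets i))⁻¹ * ∫⁻ u in B.sets i, ENNReal.ofReal (f u - t) ∂μ) ^ B.blockCard i := by
  obtain ⟨hV, hT, hindep, hlaw⟩ := h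
  set D : Set (𝔘 × ℝ) := {p | t < p.2 ∧ p.2 ≤ f p.1} with hD
  have hDm : MeasurableSet D :=
    (measurableSet_lt measurable_const measurable_snd).inter
      (measurableSet_le measurable_snd (hf.comp measurable_fst))
  have hpair : ∀ j, Measurable (fun ω => (V j ω, T j ω)) := fun j => (hV j).prodMk (hT j)
  -- the event as a union
  have hset : {ω | t < WCS f V T ω} = ⋃ j, (fun ω => (V j ω, T j ω)) ⁻¹' D := by
    ext ω
    simp only [Set.mem_setOf_eq, Set.mem_iUnion, Set.mem_preimage, hD, wcs_lt_iff ht ω]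
  -- each factor
  have hfac : ∀ j, P ((fun ω => (V j ω, T j ω)) ⁻¹' Dᶜ) =
      1 - (μ (B.sets (B.idx j)))⁻¹ *
        ∫⁻ u in B.sets (B.idx j), ENNReal.ofReal (f u - t) ∂μ := by
    intro j
    haveI : IsProbabilityMeasure (volume.restrict (Set.Icc (0:ℝ) 1)) :=
      ⟨by simp [Real.volume_Icc]⟩
    haveI : IsProbabilityMeasure (μ[|B.sets (B.idx j)]) :=
      cond_isProbabilityMeasure (meas_sets_ne_zero B (B.idx j))
    have hmap : P ((fun ω => (V j ω, T j ω)) ⁻¹' Dᶜ) =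
        ((μ[|B.sets (B.idx j)]).prod (volume.restrict (Set.Icc (0:ℝ) 1))) Dᶜ := by
      rw [← hlaw j, Measure.map_apply (hpair j) hDm.compl]
    rw [hmap, prob_compl_eq_one_sub hDm]
    congr 1
    -- prod measure of D
    rw [Measure.prod_apply hDm]
    have hslice : ∀ u, (volume.restrict (Set.Icc (0:ℝ) 1)) (Prod.mk u ⁻¹' D)
        = ENNReal.ofReal (f u - t) := by
      intro u
      have : Prod.mk u ⁻¹' D = Set.Ioc t (f u) := by
        ext s; simp [hD, Set.mem_Ioc, and_comm]
      rw [this, Measure.restrict_apply measurableSet_Ioc]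
      rcases le_or_gt (f u) t with hle | hlt
      · rw [Set.Ioc_eq_empty_of_le hle, Set.empty_inter, measure_empty, Eq.comm,
          ENNReal.ofReal_eq_zero]
        linarith
      · have hsub : Set.Ioc t (f u) ∩ Set.Icc 0 1 = Set.Ioc t (f u) := by
          apply Set.inter_eq_self_of_subset_left
          intro s hs
          exact ⟨by linarith [hs.1], by linarith [hs.2, (hf01 u).2]⟩
        rw [hsub, Real.volume_Ioc]
    simp_rw [hslice]
    rw [ProbabilityTheory.cond, lintegral_smul_measure, smul_eq_mul]
  -- assemble
  rw [hset]
  have hUm : MeasurableSet (⋃ j, (fun ω => (V j ω, T j ω)) ⁻¹' D) :=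
    MeasurableSet.iUnion fun j => (hpair j) hDm
  rw [← compl_compl (⋃ j, (fun ω => (V j ω, T j ω)) ⁻¹' D), prob_compl_eq_one_sub hUm.compl]
  congr 1
  have hIc : (⋃ j, (fun ω => (V j ω, T j ω)) ⁻¹' D)ᶜ
      = ⋂ j ∈ (Finset.univ : Finset (Fin n)), (fun ω => (V j ω, T j ω)) ⁻¹' Dᶜ := by
    simp [Set.compl_iUnion]
  rw [hIc, hindep.measure_inter_preimage_eq_mul Finset.univ (fun i _ => hDm.compl)]
  calc ∏ j : Fin n, P ((fun ω => (V j ω, T j ω)) ⁻¹' Dᶜ)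
      = ∏ j : Fin n, (1 - (μ (B.sets (B.idx j)))⁻¹ *
          ∫⁻ u in B.sets (B.idx j), ENNReal.ofReal (f u - t) ∂μ) :=
        Finset.prod_congr rfl fun j _ => hfac j
    _ = ∏ i : Fin B.b, ∏ j ∈ Finset.univ.filter (fun j => B.idx j = i),
          (1 - (μ (B.sets (B.idx j)))⁻¹ *
          ∫⁻ u in B.sets (B.idx j), ENNReal.ofReal (f u - t) ∂μ) :=
        (Finset.prod_fiberwise_of_maps_to (fun j _ => Finset.mem_univ (B.idx j)) _).symm
    _ = ∏ i : Fin B.b,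
        (1 - (μ (B.sets i))⁻¹ * ∫⁻ u in B.sets i, ENNReal.ofReal (f u - t) ∂μ) ^ B.blockCard i := by
        refine Finset.prod_congr rfl fun i _ => ?_
        rw [StratPart.blockCard, ← Finset.prod_const]
        refine Finset.prod_congr rfl fun j hj => ?_
        rw [(Finset.mem_filter.1 hj).2]


lemma sample_prob_neg (B : StratPart 𝔘 μ n) {V : Fin n → Ω → 𝔘} {T : Fin n → Ω → ℝ}
    (h : IsCensoredStratSample B P V T) {t : ℝ} (ht : t < 0) :
    1 ≤ P {ω | t < WCS f V T ω} := by
  obtain ⟨hV, hT, hindep, hlaw⟩ := h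
  have hpair : ∀ j, Measurable (fun ω => (V j ω, T j ω)) := fun j => (hV j).prodMk (hT j)
  have hsub : {ω | t < WCS f V T ω}ᶜ ⊆ ⋃ j, {ω | T j ω < 0} := by
    intro ω hω
    simp only [Set.mem_compl_iff, Set.mem_setOf_eq, not_lt] at hω
    rcases isEmpty_or_nonempty {j : Fin n // T j ω ≤ f (V j ω)} with he | hne
    · exfalso
      rw [WCS, Real.iSup_of_isEmpty] at hω
      linarith
    · obtain ⟨j0⟩ := hne
      have hle : (fun j : {j : Fin n // T j ω ≤ f (V j ω)} => T j.1 ω) j0 ≤ WCS f V T ω :=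
        le_ciSup (f := fun j : {j : Fin n // T j ω ≤ f (V j ω)} => T j.1 ω)
          (Set.Finite.bddAbove (Set.finite_range _)) j0
      exact Set.mem_iUnion.2 ⟨j0.1, by simp only [Set.mem_setOf_eq]; linarith⟩
  have hnull : P (⋃ j, {ω | T j ω < 0}) = 0 := by
    refine measure_iUnion_null fun j => ?_
    have hps : {ω | T j ω < 0} = (fun ω => (V j ω, T j ω)) ⁻¹' (Set.univ ×ˢ Set.Iio (0:ℝ)) := by
      ext ω; simp
    rw [hps, ← Measure.map_apply (hpair j) (MeasurableSet.univ.prod measurableSet_Iio), hlaw j,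
      Measure.prod_prod, Measure.restrict_apply measurableSet_Iio]
    have : Set.Iio (0:ℝ) ∩ Set.Icc 0 1 = ∅ := by
      ext x; simp only [Set.mem_inter_iff, Set.mem_Iio, Set.mem_Icc, Set.mem_empty_iff_false,
        iff_false, not_and]
      intro hx hc; linarith
    rw [this, measure_empty, mul_zero]
  have h1 : (1:ENNReal) = P ({ω | t < WCS f V T ω} ∪ {ω | t < WCS f V T ω}ᶜ) := by
    rw [Set.union_compl_self, measure_univ]
  calc (1:ENNReal) = P ({ω | t < WCS f V T ω} ∪ {ω | t < WCS f V T ω}ᶜ) := h1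
    _ ≤ P {ω | t < WCS f V T ω} + P ({ω | t < WCS f V T ω}ᶜ) := measure_union_le _ _
    _ ≤ P {ω | t < WCS f V T ω} + 0 := by
        gcongr
        exact le_of_le_of_eq (measure_mono hsub) hnull
    _ = P {ω | t < WCS f V T ω} := add_zero _


end Lemmas

/-- Theorem 3.2: with censored observations, if `𝒞 ≤_ref 𝓑` then
`W_CS^𝒞 ≤_st W_CS^𝓑`. -/
theorem censored_max_stochastic_order
    {Ω 𝔘 : Type*} [MeasurableSpace Ω] [MeasurableSpace 𝔘]
    (μ : Measure 𝔘) [IsProbabilityMeasure μ] [NullSingletonClass μ]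
    (P : Measure Ω) [IsProbabilityMeasure P]
    (n : ℕ) [NeZero n] (f : 𝔘 → ℝ) (hf : Measurable f)
    (hf01 : ∀ u, f u ∈ Set.Icc (0:ℝ) 1)
    (C B : StratPart 𝔘 μ n) (href : C.Refines B)
    (VB VC : Fin n → Ω → 𝔘) (TB TC : Fin n → Ω → ℝ)
    (hVB : IsCensoredStratSample B P VB TB)
    (hVC : IsCensoredStratSample C P VC TC) :
    ∀ t : ℝ, P {ω | t < WCS f VC TC ω} ≤ P {ω | t < WCS f VB TB ω} := by
  intro t
  rcases lt_or_ge t 0 with ht | ht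
  · exact le_trans prob_le_one (sample_prob_neg B hVB ht)
  classical
  obtain ⟨ρ, hsub, hidx⟩ := href
  set g : 𝔘 → ENNReal := fun u => ENNReal.ofReal (f u - t) with hg
  set d : Fin B.b → ENNReal := fun i => ∫⁻ u in B.sets i, g u ∂μ with hd
  set a : Fin B.b → ENNReal := fun i => (μ (B.sets i))⁻¹ * d i with ha
  have hg1 : ∀ u, g u ≤ 1 := fun u => by
    rw [hg, ← ENNReal.ofReal_one]
    exact ENNReal.ofReal_le_ofReal (by linarith [(hf01 u).2])
  have hd_le : ∀ i, d i ≤ μ (B.sets i) := fun i => by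
    calc d i ≤ ∫⁻ _ in B.sets i, 1 ∂μ := lintegral_mono fun u => hg1 u
      _ = μ (B.sets i) := setLIntegral_one _
  have ha1 : ∀ i, a i ≤ 1 := fun i => by
    calc a i ≤ (μ (B.sets i))⁻¹ * μ (B.sets i) := mul_le_mul_right (hd_le i) _
      _ = 1 := ENNReal.inv_mul_cancel (meas_sets_ne_zero B i) (meas_sets_ne_top B i)
  -- measures of blocks
  have hn0 : (n : ENNReal) ≠ 0 := Nat.cast_ne_zero.2 (NeZero.ne n)
  have hμB : ∀ i, μ (B.sets i) = (B.blockCard i : ENNReal) / n := fun i => B.prob i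
  have hμC : ∀ m, μ (C.sets m) = (C.blockCard m : ENNReal) / n := fun m => C.prob m
  have hkB0 : ∀ i, (B.blockCard i : ENNReal) ≠ 0 :=
    fun i => Nat.cast_ne_zero.2 (blockCard_pos (μ := μ) B i).ne'
  have hkC0 : ∀ m, (C.blockCard m : ENNReal) ≠ 0 :=
    fun m => Nat.cast_ne_zero.2 (blockCard_pos (μ := μ) C m).ne'
  -- C-sets as unions of B-sets
  have hCeq : ∀ m, C.sets m = ⋃ i ∈ Finset.univ.filter (fun i => ρ i = m), B.sets i := by
    intro m
    ext u
    constructor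
    · intro hu
      have hcov : u ∈ ⋃ i, B.sets i := by rw [B.cover]; trivial
      obtain ⟨i, hi⟩ := Set.mem_iUnion.1 hcov
      have hρ : ρ i = m := by
        by_contra hne
        exact Set.disjoint_left.1 (C.disj hne) (hsub i hi) hu
      exact Set.mem_biUnion (Finset.mem_filter.2 ⟨Finset.mem_univ i, hρ⟩) hi
    · intro hu
      obtain ⟨i, hif, hi⟩ := Set.mem_iUnion₂.1 hu
      have hρ : ρ i = m := (Finset.mem_filter.1 hif).2
      exact hρ ▸ hsub i hi
  -- integral over C-sets
  have he : ∀ m, (∫⁻ u in C.sets m, g u ∂μ) = ∑ i ∈ Finset.univ.filter (fun i => ρ i = m), d i := by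
    intro m
    rw [hCeq m]
    exact lintegral_biUnion_finset (fun i _ j _ hij => B.disj hij)
      (fun i _ => B.meas i) g
  -- block cards
  have hl : ∀ m, C.blockCard m = ∑ i ∈ Finset.univ.filter (fun i => ρ i = m), B.blockCard i := by
    intro m
    rw [StratPart.blockCard,
      Finset.card_eq_sum_card_fiberwise (f := B.idx)
        (t := Finset.univ.filter (fun i => ρ i = m))
        (fun j hj => Finset.mem_filter.2 ⟨Finset.mem_univ _, by
          rw [← hidx j]; exact (Finset.mem_filter.1 hj).2⟩)]
    refine Finset.sum_congr rfl fun i hi => ?_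
    congr 1
    rw [Finset.filter_filter]
    apply Finset.filter_congr
    intro j _
    simp only [and_iff_right_iff_imp]
    intro hji
    rw [hidx j, hji, (Finset.mem_filter.1 hi).2]
  have hK : ∀ m, 0 < ∑ i ∈ Finset.univ.filter (fun i => ρ i = m), B.blockCard i :=
    fun m => (hl m) ▸ blockCard_pos (μ := μ) C m
  -- the per-block identity k_i * a_i = n * d_i
  have hka : ∀ i, (B.blockCard i : ENNReal) * a i = n * d i := by
    intro i
    rw [ha]
    dsimp only
    rw [hμB i, ENNReal.inv_div (Or.inl (ENNReal.natCast_ne_top n)) (Or.inl hn0),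
      ← mul_assoc, mul_comm ((B.blockCard i : ENNReal))
        ((n : ENNReal) / (B.blockCard i : ENNReal)),
      ENNReal.div_mul_cancel (hkB0 i) (ENNReal.natCast_ne_top _)]
  -- main comparison of products
  have hprod : ∏ i, (1 - a i) ^ B.blockCard i ≤
      ∏ m, (1 - (μ (C.sets m))⁻¹ * ∫⁻ u in C.sets m, g u ∂μ) ^ C.blockCard m := by
    refine le_trans (grouped_ineq ρ B.blockCard a ha1 hK) (le_of_eq ?_)
    refine Finset.prod_congr rfl fun m _ => ?_
    rw [← hl m]
    congr 2
    rw [he m, hμC m, ENNReal.inv_div (Or.inl (ENNReal.natCast_ne_top n)) (Or.inl hn0)]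
    have hsum : ∑ i ∈ Finset.univ.filter (fun i => ρ i = m), (B.blockCard i : ENNReal) * a i
        = n * ∑ i ∈ Finset.univ.filter (fun i => ρ i = m), d i := by
      rw [Finset.mul_sum]
      exact Finset.sum_congr rfl fun i _ => hka i
    rw [hsum, div_eq_mul_inv, div_eq_mul_inv, mul_right_comm]
  rw [sample_prob hf hf01 C hVC ht, sample_prob hf hf01 B hVB ht]
  exact tsub_le_tsub_left hprod 1
end

section
/- Let f : 𝔘 → [0,1] be measurable and let 𝓑 be a measurable ordered partition of 𝔘 associated to a partition 𝓑* of N = {1,…,n}. Then for every t ∈ [0,1], the distribution function of the censored maximum estimator satisfies P(W_CS^𝓑 ≤ t) = ∏_{B ∈ 𝓑} ( ∫_B [ (t ∧ f(u)) + (1 − f(u)) ] dP_{U|B}(u) )^{|B*|}. -/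
open MeasureTheory ProbabilityTheory

/-- the distribution function of the censored maximum estimator is
`P(W_CS^𝓑 ≤ t) = ∏_{B ∈ 𝓑} ( ∫_B [ (t ∧ f(u)) + (1 − f(u)) ] dP_{U|B}(u) )^{|B*|}`. -/
theorem censored_max_distribution_function
    {Ω 𝔘 : Type*} [MeasurableSpace Ω] [MeasurableSpace 𝔘]
    (μ : Measure 𝔘) [IsProbabilityMeasure μ] [NullSingletonClass μ]
    (P : Measure Ω) [IsProbabilityMeasure P]
    (n : ℕ) [NeZero n] (f : 𝔘 → ℝ) (hf : Measurable f)
    (hf01 : ∀ u, f u ∈ Set.Icc (0:ℝ) 1)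
    (B : StratPart 𝔘 μ n)
    (V : Fin n → Ω → 𝔘) (T : Fin n → Ω → ℝ)
    (hVT : IsCensoredStratSample B P V T) :
    ∀ t ∈ Set.Icc (0:ℝ) 1,
      (P {ω | WCS f V T ω ≤ t}).toReal =
        ∏ i : Fin B.b,
          (∫ u, (min t (f u) + (1 - f u)) ∂(μ[|B.sets i])) ^ (B.blockCard i) := by

  obtain ⟨hV, hT, hindep, hlaw⟩ := hVT
  intro t ht
  obtain ⟨ht0, ht1⟩ := ht
  set C : Set (𝔘 × ℝ) := {p | p.2 ≤ f p.1 → p.2 ≤ t} with hCdef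
  have hCmeas : MeasurableSet C := by
    have : C = {p : 𝔘 × ℝ | p.2 ≤ f p.1}ᶜ ∪ {p | p.2 ≤ t} := by
      ext p; simp [hCdef, imp_iff_not_or]
    rw [this]
    exact ((measurableSet_le measurable_snd (hf.comp measurable_fst)).compl).union
      (measurableSet_le measurable_snd measurable_const)
  have hset : {ω | WCS f V T ω ≤ t} = ⋂ j, (fun ω => (V j ω, T j ω)) ⁻¹' C := by
    ext ω
    simp only [Set.mem_setOf_eq, Set.mem_iInter, Set.mem_preimage, hCdef, WCS]
    constructor
    · intro h j hj
      refine le_trans ?_ h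
      exact le_ciSup (f := fun j : {j // T j ω ≤ f (V j ω)} => T j.1 ω)
        (Set.Finite.bddAbove (Set.finite_range _)) ⟨j, hj⟩
    · intro h
      exact Real.iSup_le (fun j => h j.1 j.2) ht0
  have hmeasC : ∀ j : Fin n,
      MeasurableSet[MeasurableSpace.comap (fun ω => (V j ω, T j ω)) inferInstance]
        ((fun ω => (V j ω, T j ω)) ⁻¹' C) := fun j => ⟨C, hCmeas, rfl⟩
  rw [hset, hindep.meas_iInter hmeasC]
  have hg0 : ∀ u, 0 ≤ min t (f u) + (1 - f u) := by
    intro u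
    have h1 := (hf01 u).1; have h2 := (hf01 u).2
    have : 0 ≤ min t (f u) := le_min ht0 h1
    linarith
  have hne : ∀ i, μ (B.sets i) ≠ 0 := by
    intro i
    rw [B.prob i]
    obtain ⟨j, hj⟩ := B.idx_surj i
    have hcard : (Finset.univ.filter fun j => B.idx j = i).Nonempty := ⟨j, by simp [hj]⟩
    rw [Ne, ENNReal.div_eq_zero_iff]
    push_neg
    exact ⟨by exact_mod_cast Finset.card_ne_zero.mpr hcard, ENNReal.natCast_ne_top n⟩
  have key : ∀ j : Fin n, P ((fun ω => (V j ω, T j ω)) ⁻¹' C)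
      = ENNReal.ofReal (∫ u, (min t (f u) + (1 - f u)) ∂(μ[|B.sets (B.idx j)])) := by
    intro j
    have hpm : Measurable (fun ω => (V j ω, T j ω)) := (hV j).prodMk (hT j)
    rw [← Measure.map_apply hpm hCmeas, hlaw j, Measure.prod_apply hCmeas]
    have hslice : ∀ u : 𝔘,
        (volume.restrict (Set.Icc (0:ℝ) 1)) (Prod.mk u ⁻¹' C)
          = ENNReal.ofReal (min t (f u) + (1 - f u)) := by
      intro u
      have h1 := (hf01 u).1; have h2 := (hf01 u).2
      have hpre : Prod.mk u ⁻¹' C = {s : ℝ | s ≤ f u → s ≤ t} := rfl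
      have hmeasS : MeasurableSet {s : ℝ | s ≤ f u → s ≤ t} := by
        have : {s : ℝ | s ≤ f u → s ≤ t}
            = {s : ℝ | s ≤ f u}ᶜ ∪ {s : ℝ | s ≤ t} := by
          ext s; simp [imp_iff_not_or]
        rw [this]
        exact ((measurableSet_le measurable_id measurable_const).compl).union
          (measurableSet_le measurable_id measurable_const)
      rw [hpre, Measure.restrict_apply hmeasS]
      have hsets : {s : ℝ | s ≤ f u → s ≤ t} ∩ Set.Icc 0 1
          = Set.Icc 0 (min t (f u)) ∪ Set.Ioc (f u) 1 := by
        ext s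
        simp only [Set.mem_inter_iff, Set.mem_setOf_eq, Set.mem_Icc, Set.mem_union,
          Set.mem_Ioc, le_min_iff]
        constructor
        · rintro ⟨himp, hs0, hs1⟩
          rcases le_or_gt s (f u) with hle | hlt
          · exact Or.inl ⟨hs0, himp hle, hle⟩
          · exact Or.inr ⟨hlt, hs1⟩
        · rintro (⟨hs0, hst, hsf⟩ | ⟨hlt, hs1⟩)
          · exact ⟨fun _ => hst, hs0, le_trans hst ht1⟩
          · exact ⟨fun hle => absurd hle (not_le.mpr hlt), le_trans h1 (le_of_lt hlt), hs1⟩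
      rw [hsets, measure_union ?_ measurableSet_Ioc]
      · rw [Real.volume_Icc, Real.volume_Ioc, sub_zero,
          ← ENNReal.ofReal_add (le_min ht0 h1) (by linarith)]
      · rw [Set.disjoint_left]
        rintro s ⟨_, hs2⟩ ⟨hs3, _⟩
        exact absurd (le_trans hs2 (min_le_right _ _)) (not_le.mpr hs3)
    have hmg : Measurable fun u => min t (f u) + (1 - f u) :=
      (measurable_const.min hf).add (measurable_const.sub hf)
    rw [MeasureTheory.integral_eq_lintegral_of_nonneg_ae
      (Filter.Eventually.of_forall hg0) hmg.aestronglyMeasurable]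
    have hfin : ∫⁻ u, ENNReal.ofReal (min t (f u) + (1 - f u)) ∂(μ[|B.sets (B.idx j)]) ≤ 2 := by
      calc ∫⁻ u, ENNReal.ofReal (min t (f u) + (1 - f u)) ∂(μ[|B.sets (B.idx j)])
          ≤ ∫⁻ _, 2 ∂(μ[|B.sets (B.idx j)]) := by
            refine lintegral_mono fun u => ?_
            have h1 := (hf01 u).1; have h2 := (hf01 u).2
            have : min t (f u) + (1 - f u) ≤ 2 := by
              have : min t (f u) ≤ t := min_le_left _ _
              linarith
            calc ENNReal.ofReal (min t (f u) + (1 - f u)) ≤ ENNReal.ofReal 2 :=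
                  ENNReal.ofReal_le_ofReal this
              _ = 2 := by norm_num
        _ = 2 := by
            haveI : IsProbabilityMeasure (μ[|B.sets (B.idx j)]) :=
              cond_isProbabilityMeasure (hne (B.idx j))
            simp [lintegral_const]
    rw [ENNReal.ofReal_toReal (lt_of_le_of_lt hfin (by norm_num)).ne]
    exact lintegral_congr fun u => hslice u
  have hcongr : ∀ j : Fin n, (P ((fun ω => (V j ω, T j ω)) ⁻¹' C)).toReal
      = ∫ u, (min t (f u) + (1 - f u)) ∂(μ[|B.sets (B.idx j)]) := by
    intro j
    rw [key j, ENNReal.toReal_ofReal]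
    exact integral_nonneg hg0
  rw [ENNReal.toReal_prod]
  simp_rw [hcongr]
  classical
  rw [Finset.prod_comp (fun i => ∫ u, (min t (f u) + (1 - f u)) ∂(μ[|B.sets i])) B.idx,
    Finset.image_univ_of_surjective B.idx_surj]
  rfl
end

section
/- Let f : 𝔘 → [0,1] be measurable and let 𝓑 be a measurable ordered partition of 𝔘 associated to a partition 𝓑* of N = {1,…,n}. Then the censored maximum estimator is stochastically dominated by the uncensored one: W_CS^𝓑 ≤_st W_S^𝓑, i.e. P(W_CS^𝓑 > t) ≤ P(W_S^𝓑 > t) for all real t. -/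
open MeasureTheory ProbabilityTheory

/-- the censored maximum estimator is stochastically dominated by the
uncensored one, `W_CS^𝓑 ≤_st W_S^𝓑`. -/
theorem censored_max_le_st_max
    {Ω 𝔘 : Type*} [MeasurableSpace Ω] [MeasurableSpace 𝔘]
    (μ : Measure 𝔘) [IsProbabilityMeasure μ] [NullSingletonClass μ]
    (P : Measure Ω) [IsProbabilityMeasure P]
    (n : ℕ) [NeZero n] (f : 𝔘 → ℝ) (hf : Measurable f)
    (hf01 : ∀ u, f u ∈ Set.Icc (0:ℝ) 1)
    (B : StratPart 𝔘 μ n)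
    (V : Fin n → Ω → 𝔘) (T : Fin n → Ω → ℝ)
    (hVT : IsCensoredStratSample B P V T) :
    ∀ t : ℝ, P {ω | t < WCS f V T ω} ≤ P {ω | t < WS f V ω} := by
  intro t
  refine measure_mono fun ω (hω : t < WCS f V T ω) => lt_of_lt_of_le hω ?_
  have hbdd : BddAbove (Set.range fun j => f (V j ω)) :=
    ⟨1, by rintro x ⟨j, rfl⟩; exact (hf01 _).2⟩
  have hWS0 : 0 ≤ WS f V ω := by
    have j0 : Fin n := ⟨0, Nat.pos_of_ne_zero (NeZero.ne n)⟩
    exact le_trans (hf01 (V j0 ω)).1 (le_ciSup hbdd j0)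
  refine Real.iSup_le (fun j => ?_) hWS0
  exact le_trans j.2 (le_ciSup hbdd j.1)
end

section
/- Let f : 𝔘 → ℝ be measurable with E[f(U)^2] < ∞, and let 𝒞 and 𝓑 be measurable ordered partitions of 𝔘 associated to partitions 𝒞* and 𝓑* of N = {1,…,n}, with 𝒞 ≤_ref 𝓑 (every set of 𝒞 is a union of sets of 𝓑). Then the stratified noisy integral estimators satisfy Var[W_IE^𝓑] ≤ Var[W_IE^𝒞]. -/
open MeasureTheory ProbabilityTheory

/-- A noisy stratified sample: the pairs `(V_j, ε_j)` are independent across `j`,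
`V_j` has the conditional law `P_{U|B}` of the stratum of `j`, the noise `ε_j` has law `ν`,
and `V_j` is independent of `ε_j` (the law of the pair is the product law). -/
def IsNoisyStratSample {Ω 𝔘 : Type*} [MeasurableSpace Ω] [MeasurableSpace 𝔘]
    {μ : Measure 𝔘} {n : ℕ} (B : StratPart 𝔘 μ n) (P : Measure Ω) (ν : Measure ℝ)
    (V : Fin n → Ω → 𝔘) (ε : Fin n → Ω → ℝ) : Prop :=
  (∀ j, Measurable (V j)) ∧ (∀ j, Measurable (ε j)) ∧
    iIndepFun (fun j ω => (V j ω, ε j ω)) P ∧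
    ∀ j, Measure.map (fun ω => (V j ω, ε j ω)) P = (μ[|B.sets (B.idx j)]).prod ν

/-- The noisy stratified integral estimator
`W_IE^𝓑 = (1/n) Σ_{B ∈ 𝓑} Σ_{j ∈ B*} (f(V_j^B) + ε_j)`. -/
noncomputable def WIE {Ω 𝔘 : Type*} {n : ℕ} (f : 𝔘 → ℝ) (V : Fin n → Ω → 𝔘)
    (ε : Fin n → Ω → ℝ) (ω : Ω) : ℝ :=
  (n : ℝ)⁻¹ * ∑ j, (f (V j ω) + ε j ω)

set_option linter.unusedSectionVars false
set_option linter.unusedVariables false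

section Aux
variable {𝔘 : Type*} [MeasurableSpace 𝔘] {μ : Measure 𝔘} [IsProbabilityMeasure μ]

lemma memLp_cond {f : 𝔘 → ℝ} (hf2 : MemLp f 2 μ) {s : Set 𝔘} (hs : μ s ≠ 0) :
    MemLp f 2 (μ[|s]) := by
  rw [ProbabilityTheory.cond]
  exact (hf2.restrict s).smul_measure (ENNReal.inv_ne_top.mpr hs)


lemma integral_cond_eq {g : 𝔘 → ℝ} {s : Set 𝔘} :
    ∫ x, g x ∂(μ[|s]) = (μ s).toReal⁻¹ * ∫ x in s, g x ∂μ := by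
  rw [ProbabilityTheory.cond, integral_smul_measure, ENNReal.toReal_inv, smul_eq_mul]

lemma variance_cond_eq {f : 𝔘 → ℝ} (hf2 : MemLp f 2 μ) {s : Set 𝔘} (hs : μ s ≠ 0) :
    variance f (μ[|s]) = (μ s).toReal⁻¹ * (∫ x in s, f x ^ 2 ∂μ)
      - ((μ s).toReal⁻¹ * ∫ x in s, f x ∂μ) ^ 2 := by
  have : IsProbabilityMeasure (μ[|s]) := cond_isProbabilityMeasure hs
  rw [variance_eq_sub (memLp_cond hf2 hs)]
  simp only [Pi.pow_apply]
  rw [integral_cond_eq, integral_cond_eq]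

lemma variance_noisy_obs {Ω : Type*} [MeasurableSpace Ω] {P : Measure Ω} [IsProbabilityMeasure P]
    {ν : Measure ℝ} [IsProbabilityMeasure ν]
    (hν_mean : ∫ x, x ∂ν = 0) (hν_var : Integrable (fun x => x ^ 2) ν)
    {f : 𝔘 → ℝ} (hf : Measurable f) (hf2 : MemLp f 2 μ)
    {s : Set 𝔘} (hs0 : μ s ≠ 0) {V : Ω → 𝔘} {ε : Ω → ℝ}
    (hV : Measurable V) (hε : Measurable ε)
    (hlaw : Measure.map (fun ω => (V ω, ε ω)) P = (μ[|s]).prod ν) :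
    MemLp (fun ω => f (V ω) + ε ω) 2 P ∧
    variance (fun ω => f (V ω) + ε ω) P = variance f (μ[|s]) + ∫ x, x ^ 2 ∂ν := by
  set κ := μ[|s] with hκ
  have : IsProbabilityMeasure κ := cond_isProbabilityMeasure hs0
  have hfs : MemLp f 2 κ := memLp_cond hf2 hs0
  have hid : MemLp (id : ℝ → ℝ) 2 ν :=
    (memLp_two_iff_integrable_sq measurable_id.aestronglyMeasurable).mpr hν_var
  have hmapfst : (κ.prod ν).map Prod.fst = κ := by
    rw [Measure.map_fst_prod]; simp
  have hmapsnd : (κ.prod ν).map Prod.snd = ν := by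
    rw [Measure.map_snd_prod]; simp
  have hg1 : MemLp (fun p : 𝔘 × ℝ => f p.1) 2 (κ.prod ν) :=
    (memLp_map_measure_iff (by rw [hmapfst]; exact hfs.aestronglyMeasurable)
      measurable_fst.aemeasurable).mp (by rw [hmapfst]; exact hfs)
  have hg2 : MemLp (fun p : 𝔘 × ℝ => p.2) 2 (κ.prod ν) :=
    (memLp_map_measure_iff (α := 𝔘 × ℝ) (g := (id : ℝ → ℝ))
      (by rw [hmapsnd]; exact hid.aestronglyMeasurable)
      measurable_snd.aemeasurable).mp (by rw [hmapsnd]; exact hid)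
  have hg : MemLp (fun p : 𝔘 × ℝ => f p.1 + p.2) 2 (κ.prod ν) := hg1.add hg2
  have hpairm : Measurable (fun ω => (V ω, ε ω)) := hV.prodMk hε
  have hX : MemLp (fun ω => f (V ω) + ε ω) 2 P := by
    have h2 : MemLp ((fun p : 𝔘 × ℝ => f p.1 + p.2) ∘ (fun ω => (V ω, ε ω))) 2 P :=
      (memLp_map_measure_iff (by rw [hlaw]; exact hg.aestronglyMeasurable)
        hpairm.aemeasurable).mp (by rw [hlaw]; exact hg)
    exact h2
  refine ⟨hX, ?_⟩
  have hEX : ∫ ω, (f (V ω) + ε ω) ∂P = ∫ p, (f p.1 + p.2) ∂(κ.prod ν) := by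
    rw [← hlaw, integral_map hpairm.aemeasurable
      (by rw [hlaw]; exact hg.aestronglyMeasurable)]
  have hEX2 : ∫ ω, (f (V ω) + ε ω) ^ 2 ∂P = ∫ p, (f p.1 + p.2) ^ 2 ∂(κ.prod ν) := by
    rw [← hlaw, integral_map hpairm.aemeasurable
      (by rw [hlaw]; exact (hg.aestronglyMeasurable.pow 2))]
  have hI1 : ∫ p, (f p.1 + p.2) ∂(κ.prod ν) = ∫ x, f x ∂κ := by
    have step : ∫ p : 𝔘 × ℝ, (f p.1 + p.2) ∂(κ.prod ν)
        = (∫ p : 𝔘 × ℝ, f p.1 ∂(κ.prod ν)) + ∫ p : 𝔘 × ℝ, p.2 ∂(κ.prod ν) :=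
      integral_add (hg1.integrable one_le_two) (hg2.integrable one_le_two)
    have e1 : ∫ p : 𝔘 × ℝ, f p.1 ∂(κ.prod ν) = ∫ x, f x ∂κ := by
      have h := integral_map (μ := κ.prod ν) measurable_fst.aemeasurable
        (f := f) (by rw [hmapfst]; exact hfs.aestronglyMeasurable)
      rw [hmapfst] at h; exact h.symm
    have e2 : ∫ p : 𝔘 × ℝ, p.2 ∂(κ.prod ν) = ∫ x, x ∂ν := by
      have h := integral_map (μ := κ.prod ν) measurable_snd.aemeasurable
        (f := fun x : ℝ => x) (by rw [hmapsnd]; exact hid.aestronglyMeasurable)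
      rw [hmapsnd] at h; exact h.symm
    rw [step, e1, e2, hν_mean, add_zero]
  have hI2 : ∫ p, (f p.1 + p.2) ^ 2 ∂(κ.prod ν)
      = (∫ x, f x ^ 2 ∂κ) + ∫ x, x ^ 2 ∂ν := by
    have expand : (fun p : 𝔘 × ℝ => (f p.1 + p.2) ^ 2)
        = fun p => f p.1 ^ 2 + ((2 * f p.1) * p.2 + p.2 ^ 2) := by
      funext p; ring
    have t1 : Integrable (fun p : 𝔘 × ℝ => f p.1 ^ 2) (κ.prod ν) := hg1.integrable_sq
    have t3 : Integrable (fun p : 𝔘 × ℝ => p.2 ^ 2) (κ.prod ν) := hg2.integrable_sq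
    have t2 : Integrable (fun p : 𝔘 × ℝ => (2 * f p.1) * p.2) (κ.prod ν) :=
      Integrable.mul_prod ((hfs.integrable one_le_two).const_mul 2)
        (hid.integrable one_le_two)
    have step1 : ∫ p : 𝔘 × ℝ, (f p.1 ^ 2 + ((2 * f p.1) * p.2 + p.2 ^ 2)) ∂(κ.prod ν)
        = (∫ p : 𝔘 × ℝ, f p.1 ^ 2 ∂(κ.prod ν))
          + ∫ p : 𝔘 × ℝ, ((2 * f p.1) * p.2 + p.2 ^ 2) ∂(κ.prod ν) :=
      integral_add t1 (t2.add t3)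
    have step2 : ∫ p : 𝔘 × ℝ, ((2 * f p.1) * p.2 + p.2 ^ 2) ∂(κ.prod ν)
        = (∫ p : 𝔘 × ℝ, (2 * f p.1) * p.2 ∂(κ.prod ν))
          + ∫ p : 𝔘 × ℝ, p.2 ^ 2 ∂(κ.prod ν) := integral_add t2 t3
    have e1 : ∫ p : 𝔘 × ℝ, f p.1 ^ 2 ∂(κ.prod ν) = ∫ x, f x ^ 2 ∂κ := by
      have h := integral_map (μ := κ.prod ν) measurable_fst.aemeasurable
        (f := fun x => f x ^ 2) (by rw [hmapfst]; exact hfs.aestronglyMeasurable.pow 2)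
      rw [hmapfst] at h; exact h.symm
    have e2 : ∫ p : 𝔘 × ℝ, (2 * f p.1) * p.2 ∂(κ.prod ν)
        = (∫ x, 2 * f x ∂κ) * ∫ x, x ∂ν := integral_prod_mul (fun x => 2 * f x) (fun y => y)
    have e3 : ∫ p : 𝔘 × ℝ, p.2 ^ 2 ∂(κ.prod ν) = ∫ x, x ^ 2 ∂ν := by
      have h := integral_map (μ := κ.prod ν) measurable_snd.aemeasurable
        (f := fun x : ℝ => x ^ 2) (by rw [hmapsnd]; exact hid.aestronglyMeasurable.pow 2)
      rw [hmapsnd] at h; exact h.symm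
    rw [expand, step1, step2, e1, e2, e3, hν_mean, mul_zero, zero_add]
  rw [variance_eq_sub hX, variance_eq_sub hfs]
  simp only [Pi.pow_apply]
  rw [hEX, hEX2, hI1, hI2]
  ring

end Aux
section Aux2
variable {𝔘 : Type*} [MeasurableSpace 𝔘] {μ : Measure 𝔘} [IsProbabilityMeasure μ]
  {n : ℕ} [NeZero n]

lemma StratPart.card_pos (D : StratPart 𝔘 μ n) (i : Fin D.b) :
    0 < (Finset.univ.filter fun j => D.idx j = i).card := by
  obtain ⟨j, hj⟩ := D.idx_surj i
  exact Finset.card_pos.mpr ⟨j, by simp [hj]⟩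

lemma StratPart.measure_ne_zero (D : StratPart 𝔘 μ n) (i : Fin D.b) : μ (D.sets i) ≠ 0 := by
  rw [D.prob i, Ne, ENNReal.div_eq_zero_iff]
  push_neg
  exact ⟨Nat.cast_ne_zero.mpr (D.card_pos i).ne', ENNReal.natCast_ne_top n⟩

lemma StratPart.toReal_measure (D : StratPart 𝔘 μ n) (i : Fin D.b) :
    (μ (D.sets i)).toReal = ((Finset.univ.filter fun j => D.idx j = i).card : ℝ) / n := by
  rw [D.prob i, ENNReal.toReal_div, ENNReal.toReal_natCast, ENNReal.toReal_natCast]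

lemma StratPart.toReal_pos (D : StratPart 𝔘 μ n) (i : Fin D.b) :
    0 < (μ (D.sets i)).toReal :=
  ENNReal.toReal_pos (D.measure_ne_zero i) (measure_ne_top μ _)

lemma variance_WIE {Ω : Type*} [MeasurableSpace Ω] {P : Measure Ω} [IsProbabilityMeasure P]
    {ν : Measure ℝ} [IsProbabilityMeasure ν]
    (hν_mean : ∫ x, x ∂ν = 0) (hν_var : Integrable (fun x => x ^ 2) ν)
    {f : 𝔘 → ℝ} (hf : Measurable f) (hf2 : MemLp f 2 μ)
    (D : StratPart 𝔘 μ n) {V : Fin n → Ω → 𝔘} {ε : Fin n → Ω → ℝ}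
    (h : IsNoisyStratSample D P ν V ε) :
    variance (WIE f V ε) P = (n : ℝ)⁻¹ ^ 2 *
      ∑ j, (variance f (μ[|D.sets (D.idx j)]) + ∫ x, x ^ 2 ∂ν) := by
  obtain ⟨hV, hε, hindep, hlaw⟩ := h
  have key := fun j => variance_noisy_obs hν_mean hν_var hf hf2
    (D.measure_ne_zero (D.idx j)) (hV j) (hε j) (hlaw j)
  have hW : WIE f V ε = (n : ℝ)⁻¹ • ∑ j, (fun ω => f (V j ω) + ε j ω) := by
    funext ω
    simp only [WIE, Pi.smul_apply, smul_eq_mul, Finset.sum_apply]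
  rw [hW, variance_smul]
  congr 1
  have hgm : Measurable (fun p : 𝔘 × ℝ => f p.1 + p.2) :=
    (hf.comp measurable_fst).add measurable_snd
  rw [IndepFun.variance_sum (fun j _ => (key j).1)
    (fun i _ j hj hij => (hindep.indepFun hij).comp hgm hgm)]
  exact Finset.sum_congr rfl fun j _ => (key j).2

lemma refine_set_eq (C B : StratPart 𝔘 μ n) {ρ : Fin B.b → Fin C.b}
    (hsub : ∀ i, B.sets i ⊆ C.sets (ρ i)) (c : Fin C.b) :
    C.sets c = ⋃ i ∈ Finset.univ.filter fun i => ρ i = c, B.sets i := by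
  ext x
  simp only [Set.mem_iUnion, Finset.mem_filter, Finset.mem_univ, true_and, exists_prop]
  constructor
  · intro hx
    have hcov : x ∈ ⋃ i, B.sets i := by rw [B.cover]; trivial
    obtain ⟨i, hi⟩ := Set.mem_iUnion.mp hcov
    refine ⟨i, ?_, hi⟩
    by_contra hne
    exact Set.disjoint_left.mp (C.disj hne) (hsub i hi) hx
  · rintro ⟨i, hc, hxi⟩
    exact hc ▸ hsub i hxi

lemma stratum_key (C B : StratPart 𝔘 μ n) {ρ : Fin B.b → Fin C.b}
    (hsub : ∀ i, B.sets i ⊆ C.sets (ρ i))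
    {f : 𝔘 → ℝ} (hf2 : MemLp f 2 μ) (c : Fin C.b) :
    ∑ i ∈ Finset.univ.filter (fun i => ρ i = c),
        ((Finset.univ.filter fun j => B.idx j = i).card : ℝ) * variance f (μ[|B.sets i])
      ≤ (∑ i ∈ Finset.univ.filter (fun i => ρ i = c),
          ((Finset.univ.filter fun j => B.idx j = i).card : ℝ))
        * variance f (μ[|C.sets c]) := by
  classical
  set S := Finset.univ.filter (fun i : Fin B.b => ρ i = c) with hS
  set q : Fin B.b → ℝ := fun i => (μ (B.sets i)).toReal with hqdef
  have hq : ∀ i ∈ S, 0 < q i := fun i _ => B.toReal_pos i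
  set Q : ℝ := (μ (C.sets c)).toReal with hQdef
  have hQpos : 0 < Q := C.toReal_pos c
  have hmeasC : μ (C.sets c) = ∑ i ∈ S, μ (B.sets i) := by
    rw [refine_set_eq C B hsub c]
    exact measure_biUnion_finset (fun i _ j _ hij => B.disj hij) (fun i _ => B.meas i)
  have hQ : Q = ∑ i ∈ S, q i := by
    rw [hQdef, hmeasC, ENNReal.toReal_sum (fun i _ => measure_ne_top μ _)]
  set J1 : Fin B.b → ℝ := fun i => ∫ x in B.sets i, f x ∂μ with hJ1
  set J2 : Fin B.b → ℝ := fun i => ∫ x in B.sets i, f x ^ 2 ∂μ with hJ2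
  have hint1 : Integrable f μ := hf2.integrable one_le_two
  have hint2 : Integrable (fun x => f x ^ 2) μ := hf2.integrable_sq
  have hC1 : ∫ x in C.sets c, f x ∂μ = ∑ i ∈ S, J1 i := by
    rw [refine_set_eq C B hsub c]
    exact integral_biUnion_finset S (fun i _ => B.meas i)
      (fun i _ j _ hij => B.disj hij) (fun i _ => hint1.integrableOn)
  have hC2 : ∫ x in C.sets c, f x ^ 2 ∂μ = ∑ i ∈ S, J2 i := by
    rw [refine_set_eq C B hsub c]
    exact integral_biUnion_finset S (fun i _ => B.meas i)
      (fun i _ j _ hij => B.disj hij) (fun i _ => hint2.integrableOn)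
  have hvB : ∀ i ∈ S, variance f (μ[|B.sets i])
      = (q i)⁻¹ * J2 i - ((q i)⁻¹ * J1 i) ^ 2 :=
    fun i _ => variance_cond_eq hf2 (B.measure_ne_zero i)
  have hvC : variance f (μ[|C.sets c])
      = Q⁻¹ * (∑ i ∈ S, J2 i) - (Q⁻¹ * ∑ i ∈ S, J1 i) ^ 2 := by
    rw [variance_cond_eq hf2 (C.measure_ne_zero c), hC1, hC2]
  have hk : ∀ i, ((Finset.univ.filter fun j => B.idx j = i).card : ℝ) = n * q i := by
    intro i
    have hn : (n : ℝ) ≠ 0 := Nat.cast_ne_zero.mpr (NeZero.ne n)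
    rw [hqdef]
    simp only
    rw [B.toReal_measure i, mul_comm, div_mul_cancel₀ _ hn]
  have key : ∑ i ∈ S, q i * variance f (μ[|B.sets i]) ≤ Q * variance f (μ[|C.sets c]) := by
    have step1 : ∑ i ∈ S, q i * variance f (μ[|B.sets i])
        = (∑ i ∈ S, J2 i) - ∑ i ∈ S, (J1 i) ^ 2 / q i := by
      rw [← Finset.sum_sub_distrib]
      refine Finset.sum_congr rfl fun i hi => ?_
      rw [hvB i hi]
      have hqi : q i ≠ 0 := (hq i hi).ne'
      field_simp
    have step2 : Q * variance f (μ[|C.sets c])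
        = (∑ i ∈ S, J2 i) - (∑ i ∈ S, J1 i) ^ 2 / Q := by
      rw [hvC]
      field_simp
    rw [step1, step2]
    have titu := Finset.sq_sum_div_le_sum_sq_div S J1 hq
    rw [← hQ] at titu
    linarith
  calc ∑ i ∈ S, ((Finset.univ.filter fun j => B.idx j = i).card : ℝ)
        * variance f (μ[|B.sets i])
      = n * ∑ i ∈ S, q i * variance f (μ[|B.sets i]) := by
        rw [Finset.mul_sum]
        exact Finset.sum_congr rfl fun i _ => by rw [hk i, mul_assoc]
    _ ≤ n * (Q * variance f (μ[|C.sets c])) := by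
        exact mul_le_mul_of_nonneg_left key (by positivity)
    _ = (∑ i ∈ S, ((Finset.univ.filter fun j => B.idx j = i).card : ℝ))
        * variance f (μ[|C.sets c]) := by
        rw [← mul_assoc]
        congr 1
        rw [hQ, Finset.mul_sum]
        exact (Finset.sum_congr rfl fun i _ => (hk i).symm)

end Aux2
/-- Theorem 4.1: if `𝒞 ≤_ref 𝓑` then `Var[W_IE^𝓑] ≤ Var[W_IE^𝒞]`,
where the observations `f(V_j) + ε_j` carry i.i.d. mean-zero finite-variance noise. -/
theorem noisy_integral_variance_le
    {Ω 𝔘 : Type*} [MeasurableSpace Ω] [MeasurableSpace 𝔘]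
    (μ : Measure 𝔘) [IsProbabilityMeasure μ] [NullSingletonClass μ]
    (P : Measure Ω) [IsProbabilityMeasure P]
    (n : ℕ) [NeZero n] (f : 𝔘 → ℝ) (hf : Measurable f)
    (hf2 : MemLp f 2 μ)
    (ν : Measure ℝ) [IsProbabilityMeasure ν]
    (hν_mean : ∫ x, x ∂ν = 0) (hν_var : Integrable (fun x => x ^ 2) ν)
    (C B : StratPart 𝔘 μ n) (href : C.Refines B)
    (VB VC : Fin n → Ω → 𝔘) (εB εC : Fin n → Ω → ℝ)
    (hB : IsNoisyStratSample B P ν VB εB)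
    (hC : IsNoisyStratSample C P ν VC εC) :
    variance (WIE f VB εB) P ≤ variance (WIE f VC εC) P := by
  classical
  obtain ⟨ρ, hsub, hidx⟩ := href
  rw [variance_WIE hν_mean hν_var hf hf2 B hB, variance_WIE hν_mean hν_var hf hf2 C hC]
  refine mul_le_mul_of_nonneg_left ?_ (by positivity)
  rw [Finset.sum_add_distrib, Finset.sum_add_distrib]
  refine add_le_add_left ?_ _
  simp only [hidx]
  rw [← Finset.sum_fiberwise_of_maps_to (g := fun j => ρ (B.idx j))
      (t := (Finset.univ : Finset (Fin C.b))) (fun j _ => Finset.mem_univ _)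
      (fun j => variance f (μ[|B.sets (B.idx j)])),
    ← Finset.sum_fiberwise_of_maps_to (g := fun j => ρ (B.idx j))
      (t := (Finset.univ : Finset (Fin C.b))) (fun j _ => Finset.mem_univ _)
      (fun j => variance f (μ[|C.sets (ρ (B.idx j))]))]
  refine Finset.sum_le_sum fun c _ => ?_
  set T := Finset.univ.filter fun j => ρ (B.idx j) = c with hT
  set S := Finset.univ.filter (fun i : Fin B.b => ρ i = c) with hS
  have hR : ∑ j ∈ T, variance f (μ[|C.sets (ρ (B.idx j))])
      = (T.card : ℝ) * variance f (μ[|C.sets c]) := by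
    have hcon : ∀ j ∈ T, variance f (μ[|C.sets (ρ (B.idx j))])
        = variance f (μ[|C.sets c]) := by
      intro j hj
      rw [(Finset.mem_filter.mp hj).2]
    rw [Finset.sum_congr rfl hcon, Finset.sum_const, nsmul_eq_mul]
  have hfib : ∀ i ∈ S, T.filter (fun j => B.idx j = i)
      = Finset.univ.filter fun j => B.idx j = i := by
    intro i hi
    have hc : ρ i = c := (Finset.mem_filter.mp hi).2
    ext j
    simp only [hT, Finset.mem_filter, Finset.mem_univ, true_and]
    exact ⟨fun h => h.2, fun h => ⟨by rw [h, hc], h⟩⟩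
  have hmaps : ∀ j ∈ T, B.idx j ∈ S := by
    intro j hj
    simp only [hS, Finset.mem_filter, Finset.mem_univ, true_and]
    exact (Finset.mem_filter.mp hj).2
  have hL : ∑ j ∈ T, variance f (μ[|B.sets (B.idx j)])
      = ∑ i ∈ S, ((Finset.univ.filter fun j => B.idx j = i).card : ℝ)
        * variance f (μ[|B.sets i]) := by
    rw [← Finset.sum_fiberwise_of_maps_to hmaps
      (fun j => variance f (μ[|B.sets (B.idx j)]))]
    refine Finset.sum_congr rfl fun i hi => ?_
    have hcon : ∀ j ∈ T.filter (fun j => B.idx j = i),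
        variance f (μ[|B.sets (B.idx j)]) = variance f (μ[|B.sets i]) := by
      intro j hj
      rw [(Finset.mem_filter.mp hj).2]
    rw [Finset.sum_congr rfl hcon, Finset.sum_const, hfib i hi, nsmul_eq_mul]
  have hcard : (T.card : ℝ) = ∑ i ∈ S,
      ((Finset.univ.filter fun j => B.idx j = i).card : ℝ) := by
    rw [Finset.card_eq_sum_card_fiberwise hmaps]
    push_cast
    exact Finset.sum_congr rfl fun i hi => by rw [hfib i hi]
  rw [hL, hR, hcard]
  exact stratum_key C B hsub hf2 c
end

section
/- Let 𝓐 = (A_1,…,A_n) be a measurable partition of 𝔘 with P(U ∈ A_i) = 1/n for each i, let A_1 be split into measurable subsets A_{1a} and A_{1b} with P(U ∈ A_{1a}) = P(U ∈ A_{1b}) = 1/(2n), and define f(u) = 1 for u ∈ A_{1a}, f(u) = −1 for u ∈ A_{1b}, and f(u) = 0 otherwise. Let W_I^𝓐 = (1/n) Σ_{i=1}^n f(V_i), where V_1,…,V_n are independent with V_i distributed as the conditional law of U given U ∈ A_i, and let W_I^𝓓 = (1/n) Σ_{j=1}^n f(V_j'), where V_1',…,V_n' are i.i.d. with the law of U.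 Then: (i) Var[W_I^𝓐] = Var[W_I^𝓓] = 1/n²; (ii) E|W_I^𝓐| = 1/n; (iii) E|W_I^𝓓| < 1/n. In particular, W_I^𝓐 is not dominated by W_I^𝓓 in the convex order, even though both are unbiased estimators of E[f(U)] = 0 with equal variances. -/
open MeasureTheory ProbabilityTheory


lemma variance_congr_ae' {Ω : Type*} [MeasurableSpace Ω] {μ : Measure Ω} {X Y : Ω → ℝ}
    (h : X =ᵐ[μ] Y) : variance X μ = variance Y μ := by
  unfold ProbabilityTheory.variance ProbabilityTheory.evariance
  have hI : μ[X] = μ[Y] := integral_congr_ae h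
  congr 1
  refine lintegral_congr_ae ?_
  filter_upwards [h] with ω hω
  rw [hω, hI]


/-- Example 4.2: for the function `f = 1` on `A_{1a}`, `= −1` on `A_{1b}`
and `= 0` elsewhere, the fully stratified estimator `W_I^𝓐` and the unstratified estimator
`W_I^𝓓` satisfy `Var[W_I^𝓐] = Var[W_I^𝓓] = 1/n²`, `E|W_I^𝓐| = 1/n` and `E|W_I^𝓓| < 1/n`;
in particular `W_I^𝓐` is not dominated by `W_I^𝓓` in the convex order. -/
theorem counterexample_convex_order
    {Ω 𝔘 : Type*} [MeasurableSpace Ω] [MeasurableSpace 𝔘]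
    (μ : Measure 𝔘) [IsProbabilityMeasure μ] [NullSingletonClass μ]
    (P : Measure Ω) [IsProbabilityMeasure P]
    (n : ℕ) (hn : 2 ≤ n)
    -- the partition 𝓐 = (A_1,…,A_n) with P(U ∈ A_i) = 1/n
    (A : Fin n → Set 𝔘) (hAmeas : ∀ i, MeasurableSet (A i))
    (hAdisj : Pairwise (Function.onFun Disjoint A))
    (hAcover : (⋃ i, A i) = Set.univ)
    (hAprob : ∀ i, μ (A i) = (n : ENNReal)⁻¹)
    -- the splitting of A_1 into A_{1a} and A_{1b} of measure 1/(2n) each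
    (A1a A1b : Set 𝔘) (hmA1a : MeasurableSet A1a) (hmA1b : MeasurableSet A1b)
    (hsplit_disj : Disjoint A1a A1b) (hsplit_union : A1a ∪ A1b = A ⟨0, by omega⟩)
    (hpA1a : μ A1a = ((2 * n : ℕ) : ENNReal)⁻¹) (hpA1b : μ A1b = ((2 * n : ℕ) : ENNReal)⁻¹)
    -- the function f
    (f : 𝔘 → ℝ)
    (hfdef : ∀ u, f u = A1a.indicator (fun _ => (1 : ℝ)) u - A1b.indicator (fun _ => (1 : ℝ)) u)
    -- the stratified sample V and the i.i.d. sample V'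
    (V V' : Fin n → Ω → 𝔘)
    (hVmeas : ∀ i, Measurable (V i)) (hVindep : iIndepFun V P)
    (hVlaw : ∀ i, Measure.map (V i) P = μ[|A i])
    (hV'meas : ∀ i, Measurable (V' i)) (hV'indep : iIndepFun V' P)
    (hV'law : ∀ i, Measure.map (V' i) P = μ) :
    variance (fun ω => (n : ℝ)⁻¹ * ∑ i, f (V i ω)) P = ((n : ℝ) ^ 2)⁻¹ ∧
    variance (fun ω => (n : ℝ)⁻¹ * ∑ i, f (V' i ω)) P = ((n : ℝ) ^ 2)⁻¹ ∧
    (∫ ω, |(n : ℝ)⁻¹ * ∑ i, f (V i ω)| ∂P) = (n : ℝ)⁻¹ ∧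
    (∫ ω, |(n : ℝ)⁻¹ * ∑ i, f (V' i ω)| ∂P) < (n : ℝ)⁻¹ := by
  classical
  set i0 : Fin n := ⟨0, by omega⟩ with hi0def
  set i1 : Fin n := ⟨1, by omega⟩ with hi1def
  have hi01 : i0 ≠ i1 := by simp [hi0def, hi1def, Fin.ext_iff]
  -- numeric basics
  have hnN0 : (n : ℕ) ≠ 0 := by omega
  have hnR0 : (n : ℝ) ≠ 0 := by exact_mod_cast hnN0
  have hnRpos : (0 : ℝ) < n := by positivity
  have hnE0 : (n : ENNReal) ≠ 0 := by exact_mod_cast hnN0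
  have hnET : (n : ENNReal) ≠ ⊤ := ENNReal.natCast_ne_top n
  have h2nE : ((2 * n : ℕ) : ENNReal) ≠ 0 := by
    simp [Nat.cast_mul]; omega
  have h2nET : ((2 * n : ℕ) : ENNReal) ≠ ⊤ := ENNReal.natCast_ne_top _
  -- f basics
  have hfeq : f = fun u => A1a.indicator (fun _ => (1 : ℝ)) u - A1b.indicator (fun _ => (1 : ℝ)) u :=
    funext hfdef
  have hfmeas : Measurable f := by
    rw [hfeq]
    exact (measurable_const.indicator hmA1a).sub (measurable_const.indicator hmA1b)
  have hnotb : ∀ u ∈ A1a, u ∉ A1b := fun u hu => Set.disjoint_left.mp hsplit_disj hu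
  have hfa : ∀ u ∈ A1a, f u = 1 := by
    intro u hu; rw [hfdef]; simp [Set.indicator_of_mem hu, Set.indicator_of_notMem (hnotb u hu)]
  have hfb : ∀ u ∈ A1b, f u = -1 := by
    intro u hu
    have h1 : u ∉ A1a := fun h => hnotb u h hu
    rw [hfdef]; simp [Set.indicator_of_mem hu, Set.indicator_of_notMem h1]
  have hf0 : ∀ u, u ∉ A1a ∪ A1b → f u = 0 := by
    intro u hu
    rw [Set.mem_union] at hu; push_neg at hu
    rw [hfdef]; simp [Set.indicator_of_notMem hu.1, Set.indicator_of_notMem hu.2]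
  have hfabs : ∀ u, |f u| ≤ 1 := by
    intro u
    by_cases h1 : u ∈ A1a
    · rw [hfa u h1]; norm_num
    · by_cases h2 : u ∈ A1b
      · rw [hfb u h2]; norm_num
      · rw [hf0 u (by simp [h1, h2])]; norm_num
  have hsq_eq_abs : ∀ u, (f u) ^ 2 = |f u| := by
    intro u
    by_cases h1 : u ∈ A1a
    · rw [hfa u h1]; norm_num
    · by_cases h2 : u ∈ A1b
      · rw [hfb u h2]; norm_num
      · rw [hf0 u (by simp [h1, h2])]; norm_num
  -- subsets
  have hsub_a : A1a ⊆ A i0 := hsplit_union ▸ Set.subset_union_left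
  have hsub_b : A1b ⊆ A i0 := hsplit_union ▸ Set.subset_union_right
  -- preimage measures under the stratified sample
  have hmapV : ∀ i (s : Set 𝔘), MeasurableSet s →
      P ((V i) ⁻¹' s) = (μ (A i))⁻¹ * μ (A i ∩ s) := by
    intro i s hs
    rw [← Measure.map_apply (hVmeas i) hs, hVlaw i, ProbabilityTheory.cond_apply (hAmeas i)]
  have hkey : (n : ENNReal) * ((2 * n : ℕ) : ENNReal)⁻¹ = 2⁻¹ := by
    rw [Nat.cast_mul, Nat.cast_ofNat, ENNReal.mul_inv (Or.inl two_ne_zero) (Or.inl ENNReal.ofNat_ne_top)]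
    rw [mul_comm (2 : ENNReal)⁻¹ _, ← mul_assoc, ENNReal.mul_inv_cancel hnE0 hnET, one_mul]
  have hPa0 : P ((V i0) ⁻¹' A1a) = 2⁻¹ := by
    rw [hmapV i0 A1a hmA1a, Set.inter_eq_self_of_subset_right hsub_a, hAprob i0, inv_inv,
      hpA1a, hkey]
  have hPb0 : P ((V i0) ⁻¹' A1b) = 2⁻¹ := by
    rw [hmapV i0 A1b hmA1b, Set.inter_eq_self_of_subset_right hsub_b, hAprob i0, inv_inv,
      hpA1b, hkey]
  -- a.e. vanishing for i ≠ i0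
  have hzero : ∀ i, i ≠ i0 → ∀ᵐ ω ∂P, f (V i ω) = 0 := by
    intro i hi
    have hm : MeasurableSet (A1a ∪ A1b) := hmA1a.union hmA1b
    have h0 : P ((V i) ⁻¹' (A1a ∪ A1b)) = 0 := by
      rw [hmapV i _ hm]
      have : μ (A i ∩ (A1a ∪ A1b)) = 0 := by
        have hsub : A i ∩ (A1a ∪ A1b) ⊆ A i ∩ A i0 := by
          rw [hsplit_union]
        have : A i ∩ A i0 = ∅ := Set.disjoint_iff_inter_eq_empty.mp (hAdisj hi)
        exact measure_mono_null (this ▸ hsub) (by simp)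
      rw [this, mul_zero]
    have := measure_eq_zero_iff_ae_notMem.mp h0
    filter_upwards [this] with ω hω
    exact hf0 _ hω
  -- a.e. membership for i0
  have hone : ∀ᵐ ω ∂P, V i0 ω ∈ A1a ∪ A1b := by
    have hm : MeasurableSet (A1a ∪ A1b) := hmA1a.union hmA1b
    have h1 : P ((V i0) ⁻¹' (A1a ∪ A1b)) = 1 := by
      rw [hmapV i0 _ hm, hsplit_union, Set.inter_self, hAprob i0, inv_inv,
        ENNReal.mul_inv_cancel hnE0 hnET]
    have hc : P ((V i0) ⁻¹' (A1a ∪ A1b))ᶜ = 0 := by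
      rw [measure_compl ((hVmeas i0) hm) (measure_ne_top _ _), h1, measure_univ, tsub_self]
    filter_upwards [measure_eq_zero_iff_ae_notMem.mp hc] with ω hω
    exact Set.notMem_compl_iff.mp hω
  have habs1 : ∀ᵐ ω ∂P, |f (V i0 ω)| = 1 := by
    filter_upwards [hone] with ω hω
    rcases hω with h | h
    · rw [hfa _ h]; norm_num
    · rw [hfb _ h]; norm_num
  -- a.e. reduction of the stratified sum
  have hWae : (fun ω => (n : ℝ)⁻¹ * ∑ i, f (V i ω)) =ᵐ[P] (fun ω => (n : ℝ)⁻¹ * f (V i0 ω)) := by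
    have hall : ∀ᵐ ω ∂P, ∀ i, i ≠ i0 → f (V i ω) = 0 := by
      rw [ae_all_iff]
      intro i
      by_cases hi : i = i0
      · simp [hi]
      · exact (hzero i hi).mono (fun ω hω _ => hω)
    filter_upwards [hall] with ω hω
    congr 1
    exact Finset.sum_eq_single i0 (fun b _ hb => hω b hb) (fun h => absurd (Finset.mem_univ _) h)
  -- expectation of the stratified term
  have hindic : ∀ (g : Ω → 𝔘) (_ : Measurable g), ∀ ω, f (g ω) =
      ((g ⁻¹' A1a).indicator (fun _ => (1 : ℝ)) ω) - ((g ⁻¹' A1b).indicator (fun _ => (1 : ℝ)) ω) := by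
    intro g hg ω
    rw [hfdef]
    by_cases h1 : g ω ∈ A1a <;> by_cases h2 : g ω ∈ A1b <;>
      simp [Set.indicator_of_mem, Set.indicator_of_notMem, h1, h2, Set.mem_preimage]
  have hEX0 : ∫ ω, f (V i0 ω) ∂P = 0 := by
    have := hindic (V i0) (hVmeas i0)
    rw [integral_congr_ae (Filter.Eventually.of_forall this)]
    rw [integral_sub ((integrable_const (1:ℝ)).indicator ((hVmeas i0) hmA1a))
        ((integrable_const (1:ℝ)).indicator ((hVmeas i0) hmA1b))]
    rw [integral_indicator_const _ ((hVmeas i0) hmA1a), integral_indicator_const _ ((hVmeas i0) hmA1b),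
      measureReal_def, measureReal_def, hPa0, hPb0, sub_self]
  -- MemLp facts
  have hmem : ∀ (g : Ω → 𝔘) (_ : Measurable g), MemLp (fun ω => f (g ω)) 2 P := by
    intro g hg
    exact MemLp.of_bound ((hfmeas.comp hg).aestronglyMeasurable) 1
      (Filter.Eventually.of_forall fun ω => by simpa using hfabs (g ω))
  -- variance of stratified estimator
  have hvarS : variance (fun ω => (n : ℝ)⁻¹ * ∑ i, f (V i ω)) P = ((n : ℝ) ^ 2)⁻¹ := by
    rw [variance_congr_ae' hWae, variance_const_mul]
    have hv : variance (fun ω => f (V i0 ω)) P = 1 := by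
      rw [variance_eq_sub (hmem (V i0) (hVmeas i0)), hEX0]
      have h2 : ∫ ω, (f (V i0 ω)) ^ 2 ∂P = 1 := by
        have : (fun ω => (f (V i0 ω)) ^ 2) =ᵐ[P] (fun _ => (1 : ℝ)) := by
          filter_upwards [habs1] with ω hω
          rw [hsq_eq_abs, hω]
        rw [integral_congr_ae this]; simp
      simpa using h2
    rw [hv, mul_one, ← inv_pow]
  -- E|W| for stratified estimator
  have habsS : (∫ ω, |(n : ℝ)⁻¹ * ∑ i, f (V i ω)| ∂P) = (n : ℝ)⁻¹ := by
    have h1 : (fun ω => |(n : ℝ)⁻¹ * ∑ i, f (V i ω)|) =ᵐ[P] (fun _ => (n : ℝ)⁻¹) := by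
      filter_upwards [hWae, habs1] with ω h h'
      rw [h, abs_mul, h', mul_one, abs_of_nonneg (by positivity)]
    rw [integral_congr_ae h1]; simp
  -- unstratified: change of variables
  have hmapint : ∀ (i : Fin n) (g : 𝔘 → ℝ), Measurable g →
      ∫ ω, g (V' i ω) ∂P = ∫ u, g u ∂μ := by
    intro i g hg
    rw [← hV'law i, integral_map (hV'meas i).aemeasurable hg.aestronglyMeasurable]
  have htoReal : (((2 * n : ℕ) : ENNReal)⁻¹).toReal = (2 * (n : ℝ))⁻¹ := by
    rw [ENNReal.toReal_inv, ENNReal.toReal_natCast]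
    push_cast; ring_nf
  have hEfμ : ∫ u, f u ∂μ = 0 := by
    rw [hfeq, integral_sub ((integrable_const (1:ℝ)).indicator hmA1a)
      ((integrable_const (1:ℝ)).indicator hmA1b), integral_indicator_const _ hmA1a,
      integral_indicator_const _ hmA1b, measureReal_def, measureReal_def, hpA1a, hpA1b, sub_self]
  have hfabseq : ∀ u, |f u| = A1a.indicator (fun _ => (1 : ℝ)) u + A1b.indicator (fun _ => (1 : ℝ)) u := by
    intro u
    by_cases h1 : u ∈ A1a
    · rw [hfa u h1, Set.indicator_of_mem h1, Set.indicator_of_notMem (hnotb u h1)]; norm_num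
    · by_cases h2 : u ∈ A1b
      · rw [hfb u h2, Set.indicator_of_notMem h1, Set.indicator_of_mem h2]; norm_num
      · rw [hf0 u (by simp [h1, h2]), Set.indicator_of_notMem h1, Set.indicator_of_notMem h2]
        norm_num
  have hEabsμ : ∫ u, |f u| ∂μ = (n : ℝ)⁻¹ := by
    rw [funext hfabseq] -- ill-typed? use integral_congr
    rw [integral_add ((integrable_const (1:ℝ)).indicator hmA1a)
      ((integrable_const (1:ℝ)).indicator hmA1b), integral_indicator_const _ hmA1a,
      integral_indicator_const _ hmA1b, measureReal_def, measureReal_def, hpA1a, hpA1b, htoReal]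
    simp only [smul_eq_mul, mul_one]
    rw [← two_mul]
    field_simp
  have hEsqμ : ∫ u, (f u) ^ 2 ∂μ = (n : ℝ)⁻¹ := by
    rw [integral_congr_ae (Filter.Eventually.of_forall hsq_eq_abs), hEabsμ]
  -- unstratified moments
  have hEY : ∀ i, ∫ ω, f (V' i ω) ∂P = 0 := fun i => by
    rw [hmapint i f hfmeas, hEfμ]
  have hEY2 : ∀ i, ∫ ω, (f (V' i ω)) ^ 2 ∂P = (n : ℝ)⁻¹ := fun i => by
    rw [hmapint i (fun u => (f u) ^ 2) (hfmeas.pow_const 2), hEsqμ]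
  have hEYabs : ∀ i, ∫ ω, |f (V' i ω)| ∂P = (n : ℝ)⁻¹ := fun i => by
    rw [hmapint i (fun u => |f u|) hfmeas.abs, hEabsμ]
  have hvarY : ∀ i : Fin n, variance (fun ω => f (V' i ω)) P = (n : ℝ)⁻¹ := by
    intro i
    rw [variance_eq_sub (hmem (V' i) (hV'meas i)), hEY i]
    simpa using hEY2 i
  -- variance of unstratified estimator
  have hvarU : variance (fun ω => (n : ℝ)⁻¹ * ∑ i, f (V' i ω)) P = ((n : ℝ) ^ 2)⁻¹ := by
    rw [variance_const_mul]
    have hsum_eq : (fun ω => ∑ i, f (V' i ω)) = ∑ i : Fin n, (fun ω => f (V' i ω)) := by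
      funext ω; simp
    rw [hsum_eq, IndepFun.variance_sum (fun i _ => hmem (V' i) (hV'meas i))
      (fun i _ j _ hij => (hV'indep.indepFun hij).comp hfmeas hfmeas)]
    simp only [hvarY, Finset.sum_const, Finset.card_univ, Fintype.card_fin, nsmul_eq_mul]
    rw [mul_inv_cancel₀ hnR0, mul_one, ← inv_pow]
  -- strict inequality for the unstratified estimator
  have hYint : ∀ i : Fin n, Integrable (fun ω => f (V' i ω)) P :=
    fun i => (hmem (V' i) (hV'meas i)).integrable one_le_two
  have hTint : Integrable (fun ω => ∑ i, f (V' i ω)) P := by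
    apply integrable_finset_sum
    intro i _; exact hYint i
  have hstrict : (∫ ω, |(n : ℝ)⁻¹ * ∑ i, f (V' i ω)| ∂P) < (n : ℝ)⁻¹ := by
    have habs_eq : ∀ ω, |(n : ℝ)⁻¹ * ∑ i, f (V' i ω)| = (n : ℝ)⁻¹ * |∑ i, f (V' i ω)| := by
      intro ω; rw [abs_mul, abs_of_nonneg (by positivity : (0:ℝ) ≤ (n:ℝ)⁻¹)]
    simp_rw [habs_eq]
    rw [integral_const_mul]
    have hgoal : (∫ ω, |∑ i, f (V' i ω)| ∂P) < 1 := by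
      set g : Ω → ℝ := fun ω => (∑ i, |f (V' i ω)|) - |∑ i, f (V' i ω)| with hgdef
      have hgnonneg : ∀ ω, 0 ≤ g ω := by
        intro ω
        simp only [hgdef, sub_nonneg]
        exact Finset.abs_sum_le_sum_abs _ _
      have hgint : Integrable g P := by
        apply Integrable.sub
        · exact integrable_finset_sum _ (fun i _ => (hYint i).abs)
        · exact hTint.abs
      have hsumabs : ∫ ω, (∑ i, |f (V' i ω)|) ∂P = 1 := by
        rw [integral_finset_sum _ (fun i _ => (hYint i).abs)]
        simp only [hEYabs, Finset.sum_const, Finset.card_univ, Fintype.card_fin, nsmul_eq_mul]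
        rw [mul_inv_cancel₀ hnR0]
      have hgI : ∫ ω, g ω ∂P = 1 - ∫ ω, |∑ i, f (V' i ω)| ∂P := by
        rw [hgdef]
        rw [integral_sub (integrable_finset_sum _ (fun i _ => (hYint i).abs)) hTint.abs, hsumabs]
      -- positive-probability event where g ≥ 2
      have hPs : 0 < P ((V' i0) ⁻¹' A1a ∩ (V' i1) ⁻¹' A1b) := by
        have hind := (hV'indep.indepFun hi01).measure_inter_preimage_eq_mul
        have hA : P ((V' i0) ⁻¹' A1a) = ((2 * n : ℕ) : ENNReal)⁻¹ := by
          rw [← Measure.map_apply (hV'meas i0) hmA1a, hV'law i0, hpA1a]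
        have hB : P ((V' i1) ⁻¹' A1b) = ((2 * n : ℕ) : ENNReal)⁻¹ := by
          rw [← Measure.map_apply (hV'meas i1) hmA1b, hV'law i1, hpA1b]
        rw [hind A1a A1b hmA1a hmA1b, hA, hB]
        exact ENNReal.mul_pos (ENNReal.inv_ne_zero.mpr h2nET) (ENNReal.inv_ne_zero.mpr h2nET)
      have hglower : ∀ ω ∈ (V' i0) ⁻¹' A1a ∩ (V' i1) ⁻¹' A1b, 2 ≤ g ω := by
        intro ω hω
        obtain ⟨h0, h1⟩ := hω
        have hY0 : f (V' i0 ω) = 1 := hfa _ h0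
        have hY1 : f (V' i1 ω) = -1 := hfb _ h1
        have hmem1 : i1 ∈ Finset.univ.erase i0 := Finset.mem_erase.mpr ⟨hi01.symm, Finset.mem_univ _⟩
        have hdecomp : ∀ q : Fin n → ℝ,
            ∑ i, q i = q i0 + q i1 + ∑ i ∈ (Finset.univ.erase i0).erase i1, q i := by
          intro q
          rw [← Finset.add_sum_erase _ q (Finset.mem_univ i0), ← Finset.add_sum_erase _ q hmem1,
            add_assoc]
        have hT : ∑ i, f (V' i ω) = ∑ i ∈ (Finset.univ.erase i0).erase i1, f (V' i ω) := by
          rw [hdecomp (fun i => f (V' i ω)), hY0, hY1]; ring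
        have hS : ∑ i, |f (V' i ω)| = 2 + ∑ i ∈ (Finset.univ.erase i0).erase i1, |f (V' i ω)| := by
          rw [hdecomp (fun i => |f (V' i ω)|), hY0, hY1]; norm_num
        have habs : |∑ i ∈ (Finset.univ.erase i0).erase i1, f (V' i ω)| ≤
            ∑ i ∈ (Finset.univ.erase i0).erase i1, |f (V' i ω)| :=
          Finset.abs_sum_le_sum_abs _ _
        simp only [hgdef, hS, hT]
        linarith
      have hgpos : 0 < ∫ ω, g ω ∂P := by
        rcases lt_or_eq_of_le (integral_nonneg (f := g) hgnonneg) with h | h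
        · exact h
        · exfalso
          have hg0 : g =ᵐ[P] 0 :=
            (integral_eq_zero_iff_of_nonneg hgnonneg hgint).mp h.symm
          have : P {ω | g ω ≠ 0} = 0 := by
            have := hg0
            rw [Filter.EventuallyEq, ae_iff] at this
            simpa using this
          have hsubset : (V' i0) ⁻¹' A1a ∩ (V' i1) ⁻¹' A1b ⊆ {ω | g ω ≠ 0} := by
            intro ω hω
            have := hglower ω hω
            simp only [Set.mem_setOf_eq]
            intro h0
            rw [h0] at this; linarith
          exact absurd (measure_mono_null hsubset this) (by
            intro h; rw [h] at hPs; exact lt_irrefl _ hPs)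
      have : (∫ ω, |∑ i, f (V' i ω)| ∂P) = 1 - ∫ ω, g ω ∂P := by linarith [hgI]
      rw [this]; linarith
    calc (n : ℝ)⁻¹ * ∫ ω, |∑ i, f (V' i ω)| ∂P < (n : ℝ)⁻¹ * 1 :=
          mul_lt_mul_of_pos_left hgoal (by positivity)
      _ = (n : ℝ)⁻¹ := mul_one _
  exact ⟨hvarS, hvarU, habsS, hstrict⟩
end

section
/- Let f : 𝔘 → [0,1] be measurable, and let 𝒞 and 𝓑 be measurable ordered partitions of 𝔘 associated to partitions 𝒞* and 𝓑* of N = {1,…,n}, with 𝒞 ≤_ref 𝓑 (every set of 𝒞 is a union of sets of 𝓑). Then the censored integral estimators satisfy W_CI^𝓑 ≤_cx W_CI^𝒞. -/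
open MeasureTheory ProbabilityTheory

/-- The censored integral estimator `W_CI^𝓑 = (1/n) Σ_{B ∈ 𝓑} Σ_{j ∈ B*} 1{T_j ≤ f(V_j^B)}`. -/
noncomputable def WCI {Ω 𝔘 : Type*} {n : ℕ} (f : 𝔘 → ℝ) (V : Fin n → Ω → 𝔘)
    (T : Fin n → Ω → ℝ) (ω : Ω) : ℝ :=
  (n : ℝ)⁻¹ * ∑ j, if T j ω ≤ f (V j ω) then (1 : ℝ) else 0

open Finset

namespace CensoredAux

noncomputable def G (n : ℕ) (φ : ℝ → ℝ) (p : Fin n → ℝ) : ℝ :=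
  ∑ ε : Fin n → Bool,
    (∏ k, if ε k then p k else 1 - p k) *
      φ ((n : ℝ)⁻¹ * ∑ k, (if ε k then (1:ℝ) else 0))

variable {n : ℕ}

def restEquiv (j₀ j₁ : Fin n) (h : j₀ ≠ j₁) :
    (Fin n → Bool) ≃ Bool × Bool × ({k : Fin n // k ≠ j₀ ∧ k ≠ j₁} → Bool) where
  toFun ε := (ε j₀, ε j₁, fun k => ε k.1)
  invFun x := fun k =>
    if h0 : k = j₀ then x.1 else if h1 : k = j₁ then x.2.1 else x.2.2 ⟨k, h0, h1⟩
  left_inv ε := by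
    funext k
    rcases eq_or_ne k j₀ with rfl | h0
    · simp
    · rcases eq_or_ne k j₁ with rfl | h1
      · simp [h0]
      · simp [h0, h1]
  right_inv x := by
    rcases x with ⟨y, z, g⟩
    refine Prod.ext ?_ (Prod.ext ?_ ?_)
    · simp
    · simp [h.symm, (Ne.symm h : j₁ ≠ j₀)]
    · funext k
      simp [k.2.1, k.2.2]

lemma prod_split (j₀ j₁ : Fin n) (h : j₀ ≠ j₁) (F : Fin n → ℝ) :
    ∏ k, F k = F j₀ * (F j₁ * ∏ k : {k : Fin n // k ≠ j₀ ∧ k ≠ j₁}, F k.1) := by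
  classical
  rw [← Finset.mul_prod_erase univ F (mem_univ j₀),
    ← Finset.mul_prod_erase _ F (Finset.mem_erase.mpr ⟨h.symm, mem_univ j₁⟩)]
  congr 2
  refine Finset.prod_subtype _ (fun x => ?_) (fun k => F k)
  simp [Finset.mem_erase, and_comm]

lemma sum_split (j₀ j₁ : Fin n) (h : j₀ ≠ j₁) (F : Fin n → ℝ) :
    ∑ k, F k = F j₀ + (F j₁ + ∑ k : {k : Fin n // k ≠ j₀ ∧ k ≠ j₁}, F k.1) := by
  classical
  rw [← Finset.add_sum_erase univ F (mem_univ j₀),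
    ← Finset.add_sum_erase _ F (Finset.mem_erase.mpr ⟨h.symm, mem_univ j₁⟩)]
  congr 2
  refine Finset.sum_subtype _ (fun x => ?_) (fun k => F k)
  simp [Finset.mem_erase, and_comm]

lemma G_expand (φ : ℝ → ℝ) (j₀ j₁ : Fin n) (h : j₀ ≠ j₁) (p : Fin n → ℝ) (a b : ℝ) :
    G n φ (Function.update (Function.update p j₀ a) j₁ b) =
      ∑ g : {k : Fin n // k ≠ j₀ ∧ k ≠ j₁} → Bool,
        (∏ k, if g k then p k.1 else 1 - p k.1) *
          ((1-a)*(1-b) * φ ((n:ℝ)⁻¹ * (∑ k, (if g k then (1:ℝ) else 0)))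
           + (a*(1-b) + (1-a)*b) * φ ((n:ℝ)⁻¹ * ((∑ k, (if g k then (1:ℝ) else 0)) + 1))
           + a*b * φ ((n:ℝ)⁻¹ * ((∑ k, (if g k then (1:ℝ) else 0)) + 2))) := by
  classical
  set P := Function.update (Function.update p j₀ a) j₁ b with hP
  have hPj₀ : P j₀ = a := by
    rw [hP, Function.update_of_ne h, Function.update_self]
  have hPj₁ : P j₁ = b := by rw [hP, Function.update_self]
  have hPk : ∀ k : {k : Fin n // k ≠ j₀ ∧ k ≠ j₁}, P k.1 = p k.1 := by
    intro k
    rw [hP, Function.update_of_ne k.2.2, Function.update_of_ne k.2.1]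
  rw [G, ← Equiv.sum_comp (restEquiv j₀ j₁ h).symm]
  rw [Fintype.sum_prod_type]
  rw [Fintype.sum_bool]
  simp only [Fintype.sum_prod_type, Fintype.sum_bool]
  rw [← Finset.sum_add_distrib, ← Finset.sum_add_distrib, ← Finset.sum_add_distrib]
  refine Finset.sum_congr rfl (fun g _ => ?_)
  have hε : ∀ y z, ∀ k : Fin n, (restEquiv j₀ j₁ h).symm (y, z, g) k =
      if h0 : k = j₀ then y else if h1 : k = j₁ then z else g ⟨k, h0, h1⟩ := by
    intro y z k; rfl
  have hcomp : ∀ y z,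
      ((∏ k, if (restEquiv j₀ j₁ h).symm (y, z, g) k then P k else 1 - P k) *
        φ ((n : ℝ)⁻¹ * ∑ k, (if (restEquiv j₀ j₁ h).symm (y, z, g) k then (1:ℝ) else 0)))
      = ((if y then a else 1 - a) * ((if z then b else 1 - b) *
          ∏ k : {k : Fin n // k ≠ j₀ ∧ k ≠ j₁}, if g k then p k.1 else 1 - p k.1)) *
        φ ((n : ℝ)⁻¹ * ((if y then (1:ℝ) else 0) + ((if z then (1:ℝ) else 0) +
          ∑ k : {k : Fin n // k ≠ j₀ ∧ k ≠ j₁}, (if g k then (1:ℝ) else 0)))) := by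
    intro y z
    have hprod : (∏ k, if (restEquiv j₀ j₁ h).symm (y, z, g) k then P k else 1 - P k)
        = (if y then a else 1 - a) * ((if z then b else 1 - b) *
          ∏ k : {k : Fin n // k ≠ j₀ ∧ k ≠ j₁}, if g k then p k.1 else 1 - p k.1) := by
      rw [prod_split j₀ j₁ h]
      congr 1
      · simp [hε, hPj₀]
      · congr 1
        · simp [hε, h.symm, hPj₁]
        · exact Finset.prod_congr rfl fun k _ => by simp [hε, k.2.1, k.2.2, hPk k]
    have hsum2 : (∑ k, if (restEquiv j₀ j₁ h).symm (y, z, g) k then (1:ℝ) else 0)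
        = (if y then (1:ℝ) else 0) + ((if z then (1:ℝ) else 0) +
          ∑ k : {k : Fin n // k ≠ j₀ ∧ k ≠ j₁}, (if g k then (1:ℝ) else 0)) := by
      rw [sum_split j₀ j₁ h]
      congr 1
      · simp [hε]
      · congr 1
        · simp [hε, h.symm]
        · exact Finset.sum_congr rfl fun k _ => by simp [hε, k.2.1, k.2.2]
    rw [hprod, hsum2]
  rw [hcomp, hcomp, hcomp, hcomp]
  simp only [if_pos, if_neg]
  set m := ∑ k : {k : Fin n // k ≠ j₀ ∧ k ≠ j₁}, (if g k then (1:ℝ) else 0) with hm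
  set W := ∏ k : {k : Fin n // k ≠ j₀ ∧ k ≠ j₁}, if g k then p k.1 else 1 - p k.1 with hW
  have e0 : (n:ℝ)⁻¹ * ((0:ℝ) + (0 + m)) = (n:ℝ)⁻¹ * m := by ring
  have e1 : (n:ℝ)⁻¹ * ((1:ℝ) + (0 + m)) = (n:ℝ)⁻¹ * (m + 1) := by ring
  have e1' : (n:ℝ)⁻¹ * ((0:ℝ) + (1 + m)) = (n:ℝ)⁻¹ * (m + 1) := by ring
  have e2 : (n:ℝ)⁻¹ * ((1:ℝ) + (1 + m)) = (n:ℝ)⁻¹ * (m + 2) := by ring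
  simp only [if_true, Bool.false_eq_true, if_false, e0, e1, e1', e2]
  ring
lemma G_two_point (φ : ℝ → ℝ) (hφ : ConvexOn ℝ Set.univ φ) (j₀ j₁ : Fin n) (h : j₀ ≠ j₁)
    (p : Fin n → ℝ) (hp : ∀ k : Fin n, k ≠ j₀ → k ≠ j₁ → p k ∈ Set.Icc (0:ℝ) 1)
    {a b a' b' : ℝ} (hs : a + b = a' + b') (hprod : a * b ≤ a' * b') :
    G n φ (Function.update (Function.update p j₀ a) j₁ b) ≤
      G n φ (Function.update (Function.update p j₀ a') j₁ b') := by
  rw [G_expand φ j₀ j₁ h p a b, G_expand φ j₀ j₁ h p a' b']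
  refine Finset.sum_le_sum (fun g _ => ?_)
  have hW : (0:ℝ) ≤ ∏ k : {k : Fin n // k ≠ j₀ ∧ k ≠ j₁}, if g k then p k.1 else 1 - p k.1 := by
    refine Finset.prod_nonneg (fun k _ => ?_)
    rcases hp k.1 k.2.1 k.2.2 with ⟨h0, h1⟩
    by_cases hg : g k <;> simp [hg] <;> linarith
  refine mul_le_mul_of_nonneg_left ?_ hW
  set m := ∑ k : {k : Fin n // k ≠ j₀ ∧ k ≠ j₁}, (if g k then (1:ℝ) else 0) with hm
  have hconv : φ ((n:ℝ)⁻¹ * m) + φ ((n:ℝ)⁻¹ * (m + 2)) ≥ 2 * φ ((n:ℝ)⁻¹ * (m + 1)) := by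
    have h2 := hφ.2 (Set.mem_univ ((n:ℝ)⁻¹ * m)) (Set.mem_univ ((n:ℝ)⁻¹ * (m + 2)))
      (by norm_num : (0:ℝ) ≤ 1/2) (by norm_num : (0:ℝ) ≤ 1/2) (by norm_num)
    have hmid : (1/2:ℝ) • ((n:ℝ)⁻¹ * m) + (1/2:ℝ) • ((n:ℝ)⁻¹ * (m + 2)) = (n:ℝ)⁻¹ * (m + 1) := by
      simp only [smul_eq_mul]; ring
    rw [hmid] at h2
    simp only [smul_eq_mul] at h2
    linarith
  have key : 0 ≤ (a' * b' - a * b) *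
      (φ ((n:ℝ)⁻¹ * m) - 2 * φ ((n:ℝ)⁻¹ * (m + 1)) + φ ((n:ℝ)⁻¹ * (m + 2))) :=
    mul_nonneg (by linarith) (by linarith)
  have hs1 : (a + b) * (φ ((n:ℝ)⁻¹ * (m + 1)) - φ ((n:ℝ)⁻¹ * m)) =
      (a' + b') * (φ ((n:ℝ)⁻¹ * (m + 1)) - φ ((n:ℝ)⁻¹ * m)) := by rw [hs]
  nlinarith [key, hs1]
lemma G_mono (φ : ℝ → ℝ) (hφ : ConvexOn ℝ Set.univ φ) {ι : Type} [DecidableEq ι]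
    (π : Fin n → ι) (q : Fin n → ℝ) (hq : ∀ j, q j ∈ Set.Icc (0:ℝ) 1)
    (hconst : ∀ j j', π j = π j' → q j = q j') :
    ∀ (d : ℕ) (p : Fin n → ℝ), (univ.filter fun j => p j ≠ q j).card ≤ d →
    (∀ j, p j ∈ Set.Icc (0:ℝ) 1) →
    (∀ i, ∑ j ∈ univ.filter (fun j => π j = i), p j
        = ∑ j ∈ univ.filter (fun j => π j = i), q j) →
    G n φ p ≤ G n φ q := by
  intro d
  induction d with
  | zero =>
    intro p hcard _ _
    have : p = q := by
      funext j
      by_contra hj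
      have : j ∈ univ.filter fun j => p j ≠ q j := by simp [hj]
      have := Finset.card_pos.mpr ⟨j, this⟩
      omega
    rw [this]
  | succ d IH =>
    intro p hcard hp hsum
    by_cases hpq : p = q
    · rw [hpq]
    obtain ⟨j₀, hj₀⟩ := Function.ne_iff.mp hpq
    set i₀ := π j₀ with hi₀
    set s := univ.filter (fun j => π j = i₀) with hsdef
    have hj₀s : j₀ ∈ s := by simp [hsdef, hi₀]
    have h0 : ∑ j ∈ s, (q j - p j) = 0 := by
      rw [Finset.sum_sub_distrib]
      have := hsum i₀
      linarith
    have hex : ∃ j₁ ∈ s, (q j₀ - p j₀) * (q j₁ - p j₁) < 0 := by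
      by_contra hcon
      push_neg at hcon
      have hpos : 0 < ∑ j ∈ s, (q j₀ - p j₀) * (q j - p j) := by
        refine Finset.sum_pos' hcon ⟨j₀, hj₀s, ?_⟩
        have hne0 : q j₀ - p j₀ ≠ 0 := fun hh => hj₀ (by linarith)
        exact mul_self_pos.mpr hne0
      rw [← Finset.mul_sum, h0, mul_zero] at hpos
      exact lt_irrefl _ hpos
    obtain ⟨j₁, hj₁s, hneg⟩ := hex
    have hne : j₀ ≠ j₁ := by
      rintro rfl
      exact absurd hneg (not_lt.mpr (mul_self_nonneg _))
    have hqq : q j₁ = q j₀ := hconst j₁ j₀ ((Finset.mem_filter.mp hj₁s).2.trans hi₀)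
    have hneg' : (q j₀ - p j₀) * (q j₀ - p j₁) < 0 := by
      have := hneg; rw [hqq] at this; exact this
    have hb0 : p j₁ ≠ q j₁ := by
      intro hh
      rw [hqq] at hh
      rw [hh] at hneg'
      nlinarith
    -- new value at j₁
    set v := p j₀ + p j₁ - q j₀ with hv
    set p' := Function.update (Function.update p j₀ (q j₀)) j₁ v with hp'
    have hcases : (p j₀ < q j₀ ∧ q j₀ < p j₁) ∨ (p j₁ < q j₀ ∧ q j₀ < p j₀) := by
      rcases mul_neg_iff.mp hneg' with ⟨h1, h2⟩ | ⟨h1, h2⟩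
      · exact Or.inl ⟨by linarith, by linarith⟩
      · exact Or.inr ⟨by linarith, by linarith⟩
    have hvmem : v ∈ Set.Icc (0:ℝ) 1 := by
      rcases hp j₀ with ⟨ha0, ha1⟩
      rcases hp j₁ with ⟨hb0', hb1⟩
      rcases hcases with ⟨h1, h2⟩ | ⟨h1, h2⟩ <;> constructor <;> simp [hv] <;> linarith
    -- step inequality
    have hstep : G n φ p ≤ G n φ p' := by
      have hpid : Function.update (Function.update p j₀ (p j₀)) j₁ (p j₁) = p := by
        rw [Function.update_eq_self, Function.update_eq_self]
      rw [← hpid, hp']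
      refine G_two_point φ hφ j₀ j₁ hne p (fun k _ _ => hp k) ?_ ?_
      · show p j₀ + p j₁ = q j₀ + v
        rw [hv]; ring
      · show p j₀ * p j₁ ≤ q j₀ * v
        rw [hv]; nlinarith [hneg']
    refine le_trans hstep (IH p' ?_ ?_ ?_)
    · -- card decrease
      have hsub : (univ.filter fun j => p' j ≠ q j) ⊆
          (univ.filter fun j => p j ≠ q j).erase j₀ := by
        intro j hj
        have hj' : p' j ≠ q j := (Finset.mem_filter.mp hj).2
        have hjj₀ : j ≠ j₀ := by
          rintro rfl
          apply hj'
          rw [hp', Function.update_of_ne hne, Function.update_self]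
        refine Finset.mem_erase.mpr ⟨hjj₀, Finset.mem_filter.mpr ⟨Finset.mem_univ _, ?_⟩⟩
        rcases eq_or_ne j j₁ with rfl | hjj₁
        · exact hb0
        · intro hh
          apply hj'
          rw [hp', Function.update_of_ne hjj₁, Function.update_of_ne hjj₀, hh]
      have h1 := Finset.card_le_card hsub
      have hj₀mem : j₀ ∈ univ.filter fun j => p j ≠ q j := by simp [hj₀]
      have h2 := Finset.card_erase_of_mem hj₀mem
      omega
    · -- bounds
      intro j
      rw [hp', Function.update_apply, Function.update_apply]
      split_ifs with h1 h2
      · exact hvmem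
      · exact hq j₀
      · exact hp j
    · -- fiber sums
      intro i
      rcases eq_or_ne i i₀ with rfl | hi
      · have hj₁mem : j₁ ∈ s := hj₁s
        have hj₀mem' : j₀ ∈ s.erase j₁ := Finset.mem_erase.mpr ⟨hne, hj₀s⟩
        rw [← hsdef]
        have e1 : ∑ j ∈ s, p' j = v + (q j₀ + ∑ j ∈ (s.erase j₁).erase j₀, p j) := by
          rw [hp', Finset.sum_update_of_mem hj₁mem, ← Finset.erase_eq,
            Finset.sum_update_of_mem hj₀mem', ← Finset.erase_eq]
        have e2 : ∑ j ∈ s, p j = p j₁ + (p j₀ + ∑ j ∈ (s.erase j₁).erase j₀, p j) := by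
          rw [← Finset.add_sum_erase _ p hj₁mem, ← Finset.add_sum_erase _ p hj₀mem']
        have hs0 := hsum i₀
        rw [← hsdef] at hs0
        rw [e2] at hs0
        rw [e1, hv]
        linarith
      · have hnot : ∀ j ∈ univ.filter (fun j => π j = i), p' j = p j := by
          intro j hj
          have hπj : π j = i := (Finset.mem_filter.mp hj).2
          have hjj₀ : j ≠ j₀ := by
            rintro rfl
            exact hi (hπj.symm.trans hi₀)
          have hjj₁ : j ≠ j₁ := by
            rintro rfl
            exact hi (hπj.symm.trans ((Finset.mem_filter.mp hj₁s).2.trans hi₀))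
          rw [hp', Function.update_of_ne hjj₁, Function.update_of_ne hjj₀]
        rw [Finset.sum_congr rfl hnot]
        exact hsum i
end CensoredAux
section PartA
open MeasureTheory ProbabilityTheory

lemma integrable_of_mem_Icc' {α : Type*} [MeasurableSpace α] (ν : Measure α)
    [IsProbabilityMeasure ν] {f : α → ℝ} (hf : Measurable f)
    (h01 : ∀ u, f u ∈ Set.Icc (0:ℝ) 1) : Integrable f ν := by
  refine (integrable_const (1:ℝ)).mono' hf.aestronglyMeasurable ?_
  refine Filter.Eventually.of_forall (fun u => ?_)
  rcases h01 u with ⟨h0, h1⟩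
  rw [Real.norm_eq_abs, abs_of_nonneg h0]; exact h1

lemma integral_mem_Icc' {α : Type*} [MeasurableSpace α] (ν : Measure α)
    [IsProbabilityMeasure ν] {f : α → ℝ} (hf : Measurable f)
    (h01 : ∀ u, f u ∈ Set.Icc (0:ℝ) 1) : ∫ u, f u ∂ν ∈ Set.Icc (0:ℝ) 1 := by
  constructor
  · exact integral_nonneg fun u => (h01 u).1
  · calc ∫ u, f u ∂ν ≤ ∫ _u, (1:ℝ) ∂ν :=
        integral_mono (integrable_of_mem_Icc' ν hf h01) (integrable_const 1)
          (fun u => (h01 u).2)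
    _ = 1 := by simp

lemma integral_phi_WCI {Ω 𝔘 : Type*} [MeasurableSpace Ω] [MeasurableSpace 𝔘]
    {μ : Measure 𝔘} (P : Measure Ω) [IsProbabilityMeasure P]
    {n : ℕ} (f : 𝔘 → ℝ) (hf : Measurable f) (hf01 : ∀ u, f u ∈ Set.Icc (0:ℝ) 1)
    (B : StratPart 𝔘 μ n) (V : Fin n → Ω → 𝔘) (T : Fin n → Ω → ℝ)
    (h : IsCensoredStratSample B P V T)
    (hprob : ∀ j, IsProbabilityMeasure (μ[|B.sets (B.idx j)]))
    (φ : ℝ → ℝ) :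
    ∫ ω, φ (WCI f V T ω) ∂P
      = CensoredAux.G n φ (fun j => ∫ u, f u ∂(μ[|B.sets (B.idx j)])) := by
  classical
  obtain ⟨hV, hT, hind, hmap⟩ := h
  set L := volume.restrict (Set.Icc (0:ℝ) 1) with hL
  haveI : IsProbabilityMeasure L := by
    constructor
    rw [hL, Measure.restrict_apply_univ, Real.volume_Icc]
    norm_num
  set sT : Set (𝔘 × ℝ) := {x | x.2 ≤ f x.1} with hsTdef
  have hsT : MeasurableSet sT := measurableSet_le measurable_snd (hf.comp measurable_fst)
  set st : Bool → Set (𝔘 × ℝ) := fun y => if y then sT else sTᶜ with hstdef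
  have hst : ∀ y, MeasurableSet (st y) := by
    intro y; cases y
    · simpa [hstdef] using hsT.compl
    · simpa [hstdef] using hsT
  set Y : Fin n → Ω → 𝔘 × ℝ := fun j ω => (V j ω, T j ω) with hYdef
  have hYm : ∀ j, Measurable (Y j) := fun j => (hV j).prodMk (hT j)
  set q : Fin n → ℝ := fun j => ∫ u, f u ∂(μ[|B.sets (B.idx j)]) with hq
  have hq01 : ∀ j, q j ∈ Set.Icc (0:ℝ) 1 := fun j => by
    haveI := hprob j
    exact integral_mem_Icc' _ hf hf01
  have hmeas : ∀ j (y : Bool), P (Y j ⁻¹' st y)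
      = if y then ENNReal.ofReal (q j) else 1 - ENNReal.ofReal (q j) := by
    intro j y
    haveI := hprob j
    have h1 : P (Y j ⁻¹' st y) = Measure.map (Y j) P (st y) :=
      (Measure.map_apply (hYm j) (hst y)).symm
    rw [h1, hmap j]
    have hsTm : ((μ[|B.sets (B.idx j)]).prod L) sT = ENNReal.ofReal (q j) := by
      rw [Measure.prod_apply hsT]
      have hfib : ∀ v : 𝔘, (Prod.mk v ⁻¹' sT) = Set.Iic (f v) := by
        intro v; ext t; simp [hsTdef, Set.mem_Iic]
      have hLv : ∀ v : 𝔘, L (Set.Iic (f v)) = ENNReal.ofReal (f v) := by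
        intro v
        rw [hL, Measure.restrict_apply measurableSet_Iic]
        have heq : Set.Iic (f v) ∩ Set.Icc (0:ℝ) 1 = Set.Icc 0 (f v) := by
          ext t
          rcases hf01 v with ⟨h0, h1⟩
          simp only [Set.mem_inter_iff, Set.mem_Iic, Set.mem_Icc]
          constructor
          · rintro ⟨ht, h2, _⟩; exact ⟨h2, ht⟩
          · rintro ⟨h2, ht⟩; exact ⟨ht, h2, ht.trans h1⟩
        rw [heq, Real.volume_Icc, sub_zero]
      simp_rw [hfib, hLv]
      rw [← ofReal_integral_eq_lintegral_ofReal (integrable_of_mem_Icc' _ hf hf01)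
        (Filter.Eventually.of_forall fun u => (hf01 u).1)]
    cases y
    · simp only [hstdef, Bool.false_eq_true, if_false]
      rw [measure_compl hsT (measure_ne_top _ _), measure_univ, hsTm]
    · simp only [hstdef, if_true]
      exact hsTm
  set S : (Fin n → Bool) → Set Ω := fun ε => ⋂ j, Y j ⁻¹' st (ε j) with hS
  have hSmeas : ∀ ε, MeasurableSet (S ε) := fun ε =>
    MeasurableSet.iInter fun j => (hYm j) (hst (ε j))
  have hpoint : ∀ ω, φ (WCI f V T ω) = ∑ ε : Fin n → Bool,
      Set.indicator (S ε) (fun _ => φ ((n:ℝ)⁻¹ * ∑ j, (if ε j then (1:ℝ) else 0))) ω := by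
    intro ω
    set ε₀ : Fin n → Bool := fun j => decide (T j ω ≤ f (V j ω)) with hε₀
    rw [Finset.sum_eq_single ε₀]
    · have hmem : ω ∈ S ε₀ := by
        rw [hS]
        refine Set.mem_iInter.mpr fun j => ?_
        simp only [Set.mem_preimage, hstdef, hε₀]
        by_cases hc : T j ω ≤ f (V j ω)
        · simp [hc, hsTdef, hYdef]
        · simpa [hc, hsTdef, hYdef] using hc
      rw [Set.indicator_of_mem hmem]
      congr 1
      rw [WCI]
      congr 1
      refine Finset.sum_congr rfl fun j _ => ?_
      by_cases hc : T j ω ≤ f (V j ω) <;> simp [hε₀, hc]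
    · intro ε _ hεne
      refine Set.indicator_of_notMem ?_ _
      intro hmem
      apply hεne
      funext j
      have hj := Set.mem_iInter.mp hmem j
      simp only [Set.mem_preimage, hstdef] at hj
      rcases Bool.eq_false_or_eq_true (ε j) with hb | hb <;> rw [hb] at hj ⊢ <;> symm <;>
        rw [hε₀]
      · exact decide_eq_true (by simpa [hsTdef] using hj)
      · exact decide_eq_false (not_le.mpr (by simpa [hsTdef] using hj))
    · intro hcon
      exact absurd (Finset.mem_univ ε₀) hcon
  have hfun : (fun ω => φ (WCI f V T ω)) = fun ω => ∑ ε : Fin n → Bool,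
      Set.indicator (S ε) (fun _ => φ ((n:ℝ)⁻¹ * ∑ j, (if ε j then (1:ℝ) else 0))) ω :=
    funext hpoint
  rw [hfun, integral_finset_sum _ (fun ε _ => (integrable_const _).indicator (hSmeas ε))]
  rw [CensoredAux.G]
  refine Finset.sum_congr rfl fun ε _ => ?_
  rw [integral_indicator_const _ (hSmeas ε)]
  have hPS : P (S ε) = ∏ j, P (Y j ⁻¹' st (ε j)) := by
    have hSU : S ε = ⋂ j ∈ Finset.univ, Y j ⁻¹' st (ε j) := by simp [hS]
    rw [hSU, hind.measure_inter_preimage_eq_mul Finset.univ (fun j _ => hst (ε j))]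
  rw [measureReal_def, hPS, ENNReal.toReal_prod, smul_eq_mul]
  congr 1
  refine Finset.prod_congr rfl fun j _ => ?_
  rw [hmeas j (ε j)]
  rcases Bool.eq_false_or_eq_true (ε j) with hb | hb <;>
    simp only [hb, Bool.false_eq_true, if_false, if_true]
  · simp [ENNReal.toReal_ofReal (hq01 j).1]
  · rw [ENNReal.toReal_sub_of_le (ENNReal.ofReal_le_one.mpr (hq01 j).2) ENNReal.one_ne_top]
    simp [ENNReal.toReal_ofReal (hq01 j).1]

end PartA
section Glue
open MeasureTheory ProbabilityTheory

lemma measure_block_ne_zero {𝔘 : Type*} [MeasurableSpace 𝔘] {μ : Measure 𝔘} {n : ℕ}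
    (B : StratPart 𝔘 μ n) (i : Fin B.b) : μ (B.sets i) ≠ 0 := by
  obtain ⟨j, hj⟩ := B.idx_surj i
  have hk : 0 < (Finset.univ.filter fun j => B.idx j = i).card :=
    Finset.card_pos.mpr ⟨j, by simp [hj]⟩
  rw [B.prob i]
  intro hzero
  rcases ENNReal.div_eq_zero_iff.mp hzero with h | h
  · rw [Nat.cast_eq_zero] at h
    omega
  · exact ENNReal.natCast_ne_top n h

lemma cond_block_prob {𝔘 : Type*} [MeasurableSpace 𝔘] {μ : Measure 𝔘}
    [IsProbabilityMeasure μ] {n : ℕ} (B : StratPart 𝔘 μ n) (i : Fin B.b) :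
    IsProbabilityMeasure (μ[|B.sets i]) :=
  ProbabilityTheory.cond_isProbabilityMeasure (measure_block_ne_zero B i)

lemma block_sum_eq {𝔘 : Type*} [MeasurableSpace 𝔘] {μ : Measure 𝔘}
    [IsProbabilityMeasure μ] {n : ℕ} (hn : n ≠ 0) (f : 𝔘 → ℝ)
    (B : StratPart 𝔘 μ n) (i : Fin B.b) :
    ((Finset.univ.filter fun j => B.idx j = i).card : ℝ) * ∫ u, f u ∂(μ[|B.sets i])
      = n * ∫ u in B.sets i, f u ∂μ := by
  obtain ⟨j, hj⟩ := B.idx_surj i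
  have hk : 0 < (Finset.univ.filter fun j => B.idx j = i).card :=
    Finset.card_pos.mpr ⟨j, by simp [hj]⟩
  set k := (Finset.univ.filter fun j => B.idx j = i).card with hkdef
  have hcond : μ[|B.sets i] = (μ (B.sets i))⁻¹ • μ.restrict (B.sets i) := rfl
  rw [hcond, integral_smul_measure, B.prob i, ← hkdef]
  rw [ENNReal.toReal_inv, ENNReal.toReal_div, ENNReal.toReal_natCast, ENNReal.toReal_natCast]
  rw [smul_eq_mul]
  have hk' : (k : ℝ) ≠ 0 := Nat.cast_ne_zero.mpr (by omega)
  have hn' : (n : ℝ) ≠ 0 := Nat.cast_ne_zero.mpr hn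
  field_simp

lemma sets_eq_biUnion {𝔘 : Type*} [MeasurableSpace 𝔘] {μ : Measure 𝔘} {n : ℕ}
    (C B : StratPart 𝔘 μ n) (ρ : Fin B.b → Fin C.b)
    (hρ1 : ∀ i, B.sets i ⊆ C.sets (ρ i)) (i : Fin C.b) :
    C.sets i = ⋃ l ∈ Finset.univ.filter (fun l => ρ l = i), B.sets l := by
  ext u
  constructor
  · intro hu
    have hcov : u ∈ ⋃ l, B.sets l := by rw [B.cover]; trivial
    obtain ⟨l, hl⟩ := Set.mem_iUnion.mp hcov
    have hρl : ρ l = i := by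
      by_contra hne
      have h2 : u ∈ C.sets (ρ l) := hρ1 l hl
      exact Set.disjoint_left.mp (C.disj (fun h => hne h.symm)) hu h2
    exact Set.mem_iUnion₂.mpr ⟨l, by simp [hρl], hl⟩
  · intro hu
    simp only [Set.mem_iUnion] at hu
    obtain ⟨l, hl, hu⟩ := hu
    have hli : ρ l = i := by simpa using hl
    exact hli ▸ hρ1 l hu

end Glue

/-- Theorem 4.3: with censored observations, if `𝒞 ≤_ref 𝓑` then
`W_CI^𝓑 ≤_cx W_CI^𝒞`, i.e. `E[φ(W_CI^𝓑)] ≤ E[φ(W_CI^𝒞)]` for every convex `φ : ℝ → ℝ`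
for which both expectations exist. -/
theorem censored_integral_convex_order
    {Ω 𝔘 : Type*} [MeasurableSpace Ω] [MeasurableSpace 𝔘]
    (μ : Measure 𝔘) [IsProbabilityMeasure μ] [NullSingletonClass μ]
    (P : Measure Ω) [IsProbabilityMeasure P]
    (n : ℕ) [NeZero n] (f : 𝔘 → ℝ) (hf : Measurable f)
    (hf01 : ∀ u, f u ∈ Set.Icc (0:ℝ) 1)
    (C B : StratPart 𝔘 μ n) (href : C.Refines B)
    (VB VC : Fin n → Ω → 𝔘) (TB TC : Fin n → Ω → ℝ)
    (hB : IsCensoredStratSample B P VB TB)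
    (hC : IsCensoredStratSample C P VC TC) :
    ∀ φ : ℝ → ℝ, ConvexOn ℝ Set.univ φ →
      Integrable (fun ω => φ (WCI f VB TB ω)) P →
      Integrable (fun ω => φ (WCI f VC TC ω)) P →
      ∫ ω, φ (WCI f VB TB ω) ∂P ≤ ∫ ω, φ (WCI f VC TC ω) ∂P := by
  classical
  intro φ hφ _hint1 _hint2
  obtain ⟨ρ, hρ1, hρ2⟩ := href
  have hn : n ≠ 0 := NeZero.ne n
  have hprobB : ∀ j, IsProbabilityMeasure (μ[|B.sets (B.idx j)]) :=
    fun j => cond_block_prob B (B.idx j)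
  have hprobC : ∀ j, IsProbabilityMeasure (μ[|C.sets (C.idx j)]) :=
    fun j => cond_block_prob C (C.idx j)
  rw [integral_phi_WCI P f hf hf01 B VB TB hB hprobB φ,
    integral_phi_WCI P f hf hf01 C VC TC hC hprobC φ]
  set qB : Fin B.b → ℝ := fun l => ∫ u, f u ∂(μ[|B.sets l]) with hqB
  set qC : Fin C.b → ℝ := fun l => ∫ u, f u ∂(μ[|C.sets l]) with hqC
  have hqC01 : ∀ l, qC l ∈ Set.Icc (0:ℝ) 1 := fun l => by
    haveI := cond_block_prob C l
    exact integral_mem_Icc' _ hf hf01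
  have hqB01 : ∀ l, qB l ∈ Set.Icc (0:ℝ) 1 := fun l => by
    haveI := cond_block_prob B l
    exact integral_mem_Icc' _ hf hf01
  have hint : Integrable f μ := integrable_of_mem_Icc' μ hf hf01
  refine CensoredAux.G_mono φ hφ C.idx (fun j => qC (C.idx j))
    (fun j => hqC01 (C.idx j)) (fun j j' h => by rw [h]) n (fun j => qB (B.idx j))
    ?_ (fun j => hqB01 (B.idx j)) ?_
  · calc (Finset.univ.filter fun j => qB (B.idx j) ≠ qC (C.idx j)).card
        ≤ (Finset.univ : Finset (Fin n)).card := Finset.card_filter_le _ _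
      _ = n := Finset.card_fin n
  · intro i
    -- RHS
    have hmemC : ∀ j ∈ Finset.univ.filter (fun j => C.idx j = i), qC (C.idx j) = qC i := by
      intro j hj
      rw [(Finset.mem_filter.mp hj).2]
    have hRHS : ∑ j ∈ Finset.univ.filter (fun j => C.idx j = i), qC (C.idx j)
        = n * ∫ u in C.sets i, f u ∂μ := by
      rw [Finset.sum_congr rfl hmemC, Finset.sum_const, nsmul_eq_mul]
      exact block_sum_eq hn f C i
    -- LHS
    have hLHS : ∑ j ∈ Finset.univ.filter (fun j => C.idx j = i), qB (B.idx j)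
        = n * ∫ u in C.sets i, f u ∂μ := by
      have hfilter : Finset.univ.filter (fun j => C.idx j = i)
          = Finset.univ.filter (fun j => ρ (B.idx j) = i) := by
        refine Finset.filter_congr (fun j _ => ?_)
        rw [hρ2 j]
      rw [hfilter]
      rw [Finset.sum_filter]
      rw [← Finset.sum_fiberwise Finset.univ B.idx
        (fun j => if ρ (B.idx j) = i then qB (B.idx j) else 0)]
      have h2 : ∀ l : Fin B.b,
          (∑ j ∈ Finset.univ.filter (fun j => B.idx j = l),
            (if ρ (B.idx j) = i then qB (B.idx j) else 0))
          = if ρ l = i then ((Finset.univ.filter fun j => B.idx j = l).card : ℝ) * qB l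
            else 0 := by
        intro l
        have hcongr : ∀ j ∈ Finset.univ.filter (fun j => B.idx j = l),
            (if ρ (B.idx j) = i then qB (B.idx j) else 0)
              = if ρ l = i then qB l else 0 := by
          intro j hj
          rw [(Finset.mem_filter.mp hj).2]
        rw [Finset.sum_congr rfl hcongr, Finset.sum_const]
        split_ifs
        · rw [nsmul_eq_mul]
        · rw [smul_zero]
      rw [Finset.sum_congr rfl (fun l _ => h2 l), ← Finset.sum_filter]
      have h3 : ∀ l ∈ Finset.univ.filter (fun l => ρ l = i),
          ((Finset.univ.filter fun j => B.idx j = l).card : ℝ) * qB l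
            = n * ∫ u in B.sets l, f u ∂μ := fun l _ => block_sum_eq hn f B l
      rw [Finset.sum_congr rfl h3, ← Finset.mul_sum]
      congr 1
      rw [← MeasureTheory.integral_biUnion_finset _ (fun l _ => B.meas l)
        (fun l _ l' _ hne => B.disj hne) (fun l _ => hint.integrableOn)]
      rw [← sets_eq_biUnion C B ρ hρ1 i]
    rw [hLHS, hRHS]
end
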